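/- arXiv:2101.06566 — 11 statements merged into one kernel-verified Lean document; each statement's English description precedes it below -/
import Mathlib

section
/- Let F be a real topological vector space whose topology is Fréchet–Urysohn (i.e., the closure of every subset equals its sequential closure), and let G be a real seminormed space. Then the product space F × G is Fréchet–Urysohn. -/
open Filter Topology Set

/-- Fréchet–Urysohn transfers along a surjective inducing map. -/
theorem aux_fu_of_inducing_surjective {X Y : Type*} [TopologicalSpace X] [TopologicalSpace Y]
    [FrechetUrysohnSpace X] {f : X → Y} (hf : Topology.IsInducing f)
    (hs : Function.Surjective f) : FrechetUrysohnSpace Y := by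
  constructor
  intro s y hy
  obtain ⟨x, rfl⟩ := hs y
  have hx : x ∈ closure (f ⁻¹' s) := by
    rw [hf.closure_eq_preimage_closure_image, Set.image_preimage_eq _ hs]
    exact hy
  obtain ⟨u, hu, hlim⟩ := mem_closure_iff_seq_limit.mp hx
  exact ⟨f ∘ u, fun n => hu n, (hf.continuous.tendsto x).comp hlim⟩

/-- The key diagonalization lemma: in a Hausdorff Fréchet–Urysohn real TVS, given countably
many sets each having `0` in their closure, one can find a single sequence converging to `0`
whose terms lie in sets of arbitrarily large index. -/
theorem aux_diag {F : Type*} [AddCommGroup F] [Module ℝ F] [TopologicalSpace F]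
    [IsTopologicalAddGroup F] [ContinuousSMul ℝ F] [FrechetUrysohnSpace F] [T2Space F]
    (A : ℕ → Set F) (hA : ∀ n, (0 : F) ∈ closure (A n)) :
    ∃ (m : ℕ → ℕ) (b : ℕ → F), Tendsto m atTop atTop ∧ (∀ j, b j ∈ A (m j)) ∧
      Tendsto b atTop (𝓝 0) := by
  by_cases hcex : ∃ c : F, c ≠ 0
  swap
  · push_neg at hcex
    refine ⟨id, fun _ => 0, tendsto_id, fun j => ?_, tendsto_const_nhds⟩
    obtain ⟨a, ha⟩ := closure_nonempty_iff.mp ⟨0, hA j⟩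
    rwa [← hcex a]
  obtain ⟨c, hc⟩ := hcex
  -- choose sequences in each `A n` converging to 0
  choose x hxA hxlim using fun n => mem_closure_iff_seq_limit.mp (hA n)
  -- the "bad" scalars for each row
  set E : ℕ → Set ℝ := fun n => {ε : ℝ | -(ε • c) ∈ Set.range (x n)} with hE
  have hinj : Function.Injective (fun ε : ℝ => -(ε • c)) := by
    intro a b h
    simp only [neg_inj] at h
    by_contra hab
    apply hc
    have h2 : (a - b) • c = 0 := by rw [sub_smul, h, sub_self]
    have h3 := congrArg (fun z => (a - b)⁻¹ • z) h2
    simpa [inv_smul_smul₀ (sub_ne_zero.mpr hab)] using h3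
  have hEcount : ∀ n, (E n).Countable := fun n =>
    (Set.countable_range (x n)).preimage hinj
  -- choose good scalars
  have hex : ∀ n : ℕ, ∃ ε : ℝ, ε ∈ Set.Ioo (0 : ℝ) (1 / (n + 1)) ∧ ε ∉ E n := by
    intro n
    by_contra h
    push_neg at h
    have hsub : Set.Ioo (0 : ℝ) (1 / (n + 1)) ⊆ E n := fun ε hε => h ε hε
    have hcnt : (Set.Ioo (0 : ℝ) (1 / ((n : ℝ) + 1))).Countable := (hEcount n).mono hsub
    have hlt : (0 : ℝ) < 1 / ((n : ℝ) + 1) := by positivity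
    have h1 : (Cardinal.mk (Set.Ioo (0 : ℝ) (1 / ((n : ℝ) + 1)))) ≤ Cardinal.aleph0 :=
      Cardinal.mk_le_aleph0_iff.mpr hcnt.to_subtype
    rw [Cardinal.mk_Ioo_real hlt] at h1
    exact absurd h1 Cardinal.aleph0_lt_continuum.not_ge
  choose ε hεIoo hεE using hex
  -- the perturbation sequence
  have hεlim : Tendsto ε atTop (𝓝 0) :=
    squeeze_zero (fun n => (hεIoo n).1.le) (fun n => (hεIoo n).2.le)
      tendsto_one_div_add_atTop_nhds_zero_nat
  have hy0 : Tendsto (fun n => ε n • c) atTop (𝓝 0) := by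
    have := hεlim.smul_const c
    rwa [zero_smul] at this
  -- the perturbed union set
  set B : Set F := {p : F | ∃ n k, p = ε n • c + x n k} with hB
  have h0B : (0 : F) ∈ closure B := by
    have hyB : ∀ n, ε n • c ∈ closure B := by
      intro n
      have hlim : Tendsto (fun k => ε n • c + x n k) atTop (𝓝 (ε n • c)) := by
        have := (tendsto_const_nhds (x := ε n • c)).add (hxlim n)
        rwa [add_zero] at this
      exact mem_closure_of_tendsto hlim (Eventually.of_forall fun k => ⟨n, k, rfl⟩)
    have := mem_closure_of_tendsto hy0 (Eventually.of_forall hyB)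
    rwa [closure_closure] at this
  obtain ⟨z, hzB, hz0⟩ := mem_closure_iff_seq_limit.mp h0B
  choose n k hz using hzB
  -- each fiber of `n` is finite
  have hfib : ∀ m : ℕ, {j | n j = m}.Finite := by
    intro m
    rw [← Set.not_infinite]
    intro hinf
    set φ := Nat.nth (fun j => n j = m) with hφ
    have hφmem : ∀ i, n (φ i) = m := fun i => Nat.nth_mem_of_infinite hinf i
    have hφmono : StrictMono φ := Nat.nth_strictMono hinf
    have hw : Tendsto (fun i => z (φ i) - ε m • c) atTop (𝓝 (-(ε m • c))) := by
      have := (hz0.comp hφmono.tendsto_atTop).sub (tendsto_const_nhds (x := ε m • c))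
      rwa [zero_sub] at this
    have hwmem : ∀ i, z (φ i) - ε m • c ∈ Set.range (x m) := by
      intro i
      refine ⟨k (φ i), ?_⟩
      have h1 := hz (φ i)
      rw [hφmem i] at h1
      rw [h1, add_sub_cancel_left]
    have hcl : -(ε m • c) ∈ closure (Set.range (x m)) :=
      mem_closure_of_tendsto hw (Eventually.of_forall hwmem)
    have hclosed : IsClosed (insert (0 : F) (Set.range (x m))) :=
      (hxlim m).isCompact_insert_range.isClosed
    have h2 : closure (Set.range (x m)) ⊆ insert 0 (Set.range (x m)) := by
      rw [← hclosed.closure_eq]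
      exact closure_mono (Set.subset_insert _ _)
    rcases h2 hcl with h0 | hr
    · apply hc
      have hεne : ε m ≠ 0 := ne_of_gt (hεIoo m).1
      have h4 : ε m • c = 0 := neg_eq_zero.mp h0
      have h5 := congrArg (fun z => (ε m)⁻¹ • z) h4
      simpa [inv_smul_smul₀ hεne] using h5
    · exact hεE m hr
  have htop : Tendsto n atTop atTop := by
    refine Filter.tendsto_atTop.mpr fun b => ?_
    rw [← Nat.cofinite_eq_atTop, Filter.eventually_cofinite]
    have hsub : {j | ¬ b ≤ n j} ⊆ ⋃ m ∈ Finset.range b, {j | n j = m} := by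
      intro j hj
      simp only [Set.mem_setOf_eq] at hj
      simp only [Set.mem_iUnion, Finset.mem_range]
      exact ⟨n j, Nat.lt_of_not_le hj, rfl⟩
    exact (Set.Finite.biUnion (Finset.range b).finite_toSet fun m _ => hfib m).subset hsub
  refine ⟨n, fun j => x (n j) (k j), htop, fun j => hxA (n j) (k j), ?_⟩
  have heq : (fun j => x (n j) (k j)) = fun j => z j - ε (n j) • c :=
    funext fun j => by rw [hz j, add_sub_cancel_left]
  rw [heq]
  have hyn : Tendsto (fun j => ε (n j) • c) atTop (𝓝 0) := hy0.comp htop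
  simpa using hz0.sub hyn

/-- The product of a Hausdorff Fréchet–Urysohn real TVS with a seminormed group is
Fréchet–Urysohn. -/
theorem aux_fu_prod (F G : Type*) [AddCommGroup F] [Module ℝ F] [TopologicalSpace F]
    [IsTopologicalAddGroup F] [ContinuousSMul ℝ F] [FrechetUrysohnSpace F] [T2Space F]
    [SeminormedAddCommGroup G] :
    FrechetUrysohnSpace (F × G) := by
  constructor
  rintro s ⟨x, y⟩ hp
  -- the approximating sets
  have hA' : ∀ nn : ℕ, x ∈ closure {f | ∃ g, (f, g) ∈ s ∧ ‖g - y‖ < 1 / ((nn : ℝ) + 1)} := by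
    intro nn
    rw [mem_closure_iff_nhds]
    intro U hU
    rw [mem_closure_iff_nhds] at hp
    have hball : Metric.ball y (1 / ((nn : ℝ) + 1)) ∈ 𝓝 y :=
      Metric.ball_mem_nhds y (by positivity)
    obtain ⟨⟨f, g⟩, ⟨hfU, hgV⟩, hmem⟩ := hp _ (prod_mem_nhds hU hball)
    exact ⟨f, hfU, g, hmem, by simpa [dist_eq_norm] using hgV⟩
  set A : ℕ → Set F :=
    fun nn => {f | ∃ g, (x + f, g) ∈ s ∧ ‖g - y‖ < 1 / ((nn : ℝ) + 1)} with hAdef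
  have hA : ∀ nn, (0 : F) ∈ closure (A nn) := by
    intro nn
    have hpre := (Homeomorph.addLeft x).preimage_closure
      {f | ∃ g, (f, g) ∈ s ∧ ‖g - y‖ < 1 / ((nn : ℝ) + 1)}
    have h0 : (0 : F) ∈ (Homeomorph.addLeft x) ⁻¹'
        closure {f | ∃ g, (f, g) ∈ s ∧ ‖g - y‖ < 1 / ((nn : ℝ) + 1)} := by
      show x + 0 ∈ closure _
      rw [add_zero]
      exact hA' nn
    rw [hpre] at h0
    exact h0
  obtain ⟨m, b, hm, hbmem, hb0⟩ := aux_diag A hA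
  choose g hgs hgnorm using hbmem
  refine ⟨fun j => (x + b j, g j), fun j => hgs j, ?_⟩
  have h1 : Tendsto (fun j => x + b j) atTop (𝓝 x) := by
    have := (tendsto_const_nhds (x := x)).add hb0
    rwa [add_zero] at this
  have h2 : Tendsto g atTop (𝓝 y) := by
    rw [tendsto_iff_norm_sub_tendsto_zero]
    refine squeeze_zero (fun j => norm_nonneg _) (fun j => (hgnorm j).le) ?_
    exact tendsto_one_div_add_atTop_nhds_zero_nat.comp hm
  exact h1.prodMk_nhds h2

/-- If `F` is a real topological vector space which is Fréchet–Urysohn and `G` is a real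
seminormed space, then `F × G` is Fréchet–Urysohn. -/
theorem frechetUrysohn_prod_of_seminormed
    (F G : Type*)
    [AddCommGroup F] [Module ℝ F] [TopologicalSpace F]
    [IsTopologicalAddGroup F] [ContinuousSMul ℝ F] [FrechetUrysohnSpace F]
    [SeminormedAddCommGroup G] [NormedSpace ℝ G] :
    FrechetUrysohnSpace (F × G) := by
  letI : IsTopologicalAddGroup (SeparationQuotient F) := ⟨⟩
  haveI : FrechetUrysohnSpace (SeparationQuotient F) :=
    aux_fu_of_inducing_surjective SeparationQuotient.isInducing_mk
      SeparationQuotient.surjective_mk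
  haveI : FrechetUrysohnSpace (SeparationQuotient F × G) :=
    aux_fu_prod (SeparationQuotient F) G
  exact (SeparationQuotient.isInducing_mk.prodMap Topology.IsInducing.id).frechetUrysohnSpace
end

section
/- Let E be a real normed space and let τ and π be two linear topologies on E, each weaker than the norm topology. The following are equivalent: (i) 0 does not lie in the closure of the unit sphere S_E = {e ∈ E : ‖e‖ = 1} with respect to the topology τ ∨ π (the coarsest topology refining both τ and π); (ii) there exist a τ-open neighborhood U of 0 and a π-open neighborhood V of 0 such that U ∩ V ∩ S_E = ∅; (iii) τ ∨ π equals the norm topology on E. -/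
open Topology Pointwise

/-- The norm topology on a seminormed group (the topology of its canonical uniformity). -/
def normTopology (E : Type*) [SeminormedAddCommGroup E] : TopologicalSpace E :=
  UniformSpace.toTopologicalSpace

private lemma zero_notMem_closure_sphere {E : Type*} [NormedAddCommGroup E] [NormedSpace ℝ E] :
    (0 : E) ∉ @closure E (normTopology E) {e : E | ‖e‖ = 1} := by
  intro hmem
  have hcl : IsClosed {e : E | ‖e‖ = (1 : ℝ)} := isClosed_eq continuous_norm continuous_const
  have h0 : (0 : E) ∈ {e : E | ‖e‖ = (1 : ℝ)} := hcl.closure_subset hmem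
  simp at h0

private lemma normTop_addGroup {E : Type*} [SeminormedAddCommGroup E] :
    @IsTopologicalAddGroup E (normTopology E) _ :=
  inferInstanceAs (IsTopologicalAddGroup E)

private lemma aux_le_norm {E : Type*} [NormedAddCommGroup E] [NormedSpace ℝ E]
    (σ : TopologicalSpace E) (hgrp : @IsTopologicalAddGroup E σ _)
    (hsmul : @ContinuousSMul ℝ E _ _ σ) {W : Set E}
    (hW : W ∈ @nhds E σ 0) (hWS : ∀ x ∈ W, ‖x‖ ≠ 1) :
    σ ≤ normTopology E := by
  have hgN : @IsTopologicalAddGroup E (normTopology E) _ := normTop_addGroup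
  have hmapnorm : ∀ x : E, Filter.map (x + ·) (@nhds E (normTopology E) 0)
      = @nhds E (normTopology E) x := fun x => @map_add_left_nhds_zero E (normTopology E) _ hgN x
  have hnormnhds : ∀ s : Set E, s ∈ @nhds E (normTopology E) 0 ↔
      ∃ ε > 0, Metric.ball (0 : E) ε ⊆ s := fun s => Metric.mem_nhds_iff
  letI := σ
  haveI := hgrp
  haveI := hsmul
  obtain ⟨B, ⟨hB, hBbal⟩, hBW⟩ := (nhds_basis_balanced ℝ E).mem_iff.mp hW
  have hB1 : ∀ x ∈ B, ‖x‖ < 1 := by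
    intro x hx
    by_contra h
    push_neg at h
    have hx0 : ‖x‖ ≠ 0 := by positivity
    have hmem : ‖x‖⁻¹ • x ∈ B := by
      refine hBbal.smul_mem ?_ hx
      rw [Real.norm_eq_abs, abs_of_nonneg (by positivity)]
      exact inv_le_one_of_one_le₀ h
    refine hWS _ (hBW hmem) ?_
    rw [norm_smul, Real.norm_eq_abs, abs_of_nonneg (by positivity)]
    field_simp
  have h0 : @nhds E σ 0 ≤ @nhds E (normTopology E) 0 := by
    intro s hs
    obtain ⟨ε, hε, hεs⟩ := (hnormnhds s).mp hs
    have hεB : ε • B ∈ (𝓝 (0 : E)) := (set_smul_mem_nhds_zero_iff hε.ne').mpr hB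
    refine Filter.mem_of_superset hεB ?_
    rintro _ ⟨y, hy, rfl⟩
    apply hεs
    rw [Metric.mem_ball, dist_zero_right, norm_smul, Real.norm_eq_abs, abs_of_pos hε]
    calc ε * ‖y‖ < ε * 1 := mul_lt_mul_of_pos_left (hB1 y hy) hε
      _ = ε := mul_one ε
  rw [le_iff_nhds]
  intro x
  calc @nhds E σ x = Filter.map (x + ·) (@nhds E σ 0) :=
        (@map_add_left_nhds_zero E σ _ hgrp x).symm
    _ ≤ Filter.map (x + ·) (@nhds E (normTopology E) 0) := Filter.map_mono h0
    _ = @nhds E (normTopology E) x := hmapnorm x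

/-- Theorem: for two linear topologies `τ`, `π` on a real normed space `E`, each weaker
(coarser) than the norm topology, the following are equivalent:
(i) `0` is not in the closure of the unit sphere with respect to the coarsest topology
refining both `τ` and `π` (which, in Mathlib's order on topologies where smaller means finer,
is the infimum `τ ⊓ π`);
(ii) there are a `τ`-open neighborhood `U` of `0` and a `π`-open neighborhood `V` of `0`
with `U ∩ V ∩ S_E = ∅`;
(iii) the coarsest topology refining both `τ` and `π` is the norm topology. -/
theorem complementary_topologies_tfae
    {E : Type*} [NormedAddCommGroup E] [NormedSpace ℝ E]
    (τ π : TopologicalSpace E)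
    (hτgrp : @IsTopologicalAddGroup E τ _) (hτsmul : @ContinuousSMul ℝ E _ _ τ)
    (hτweak : ∀ s : Set E, IsOpen[τ] s → IsOpen[normTopology E] s)
    (hπgrp : @IsTopologicalAddGroup E π _) (hπsmul : @ContinuousSMul ℝ E _ _ π)
    (hπweak : ∀ s : Set E, IsOpen[π] s → IsOpen[normTopology E] s) :
    List.TFAE
      [ (0 : E) ∉ @closure E (τ ⊓ π) {e : E | ‖e‖ = 1},
        ∃ U V : Set E, IsOpen[τ] U ∧ (0 : E) ∈ U ∧ IsOpen[π] V ∧ (0 : E) ∈ V ∧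
          U ∩ V ∩ {e : E | ‖e‖ = 1} = ∅,
        τ ⊓ π = normTopology E ] := by
  have getopen : ∀ (σ : TopologicalSpace E) (t : Set E), t ∈ @nhds E σ 0 →
      ∃ U, IsOpen[σ] U ∧ (0 : E) ∈ U ∧ U ⊆ t := by
    intro σ t ht
    letI := σ
    rcases mem_nhds_iff.mp ht with ⟨U, hU, hUo, h0⟩
    exact ⟨U, hUo, h0, hU⟩
  tfae_have 1 → 2 := by
    intro h
    have h' : ∃ t ∈ @nhds E (τ ⊓ π) 0, t ∩ {e : E | ‖e‖ = 1} = ∅ := by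
      letI := τ ⊓ π
      rw [mem_closure_iff_nhds] at h
      push_neg at h
      obtain ⟨t, ht, htS⟩ := h
      exact ⟨t, ht, htS⟩
    obtain ⟨t, ht, htS⟩ := h'
    rw [nhds_inf (t₁ := τ) (t₂ := π), Filter.mem_inf_iff] at ht
    obtain ⟨t₁, ht₁, t₂, ht₂, rfl⟩ := ht
    obtain ⟨U, hUo, hU0, hUt⟩ := getopen τ t₁ ht₁
    obtain ⟨V, hVo, hV0, hVt⟩ := getopen π t₂ ht₂
    refine ⟨U, V, hUo, hU0, hVo, hV0, ?_⟩
    apply Set.eq_empty_of_subset_empty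
    calc U ∩ V ∩ {e : E | ‖e‖ = 1} ⊆ t₁ ∩ t₂ ∩ {e : E | ‖e‖ = 1} :=
          Set.inter_subset_inter_left _ (Set.inter_subset_inter hUt hVt)
      _ = ∅ := htS
  tfae_have 2 → 3 := by
    rintro ⟨U, V, hUo, hU0, hVo, hV0, hUVS⟩
    refine le_antisymm ?_ (le_inf (isOpen_implies_isOpen_iff.mp hτweak)
      (isOpen_implies_isOpen_iff.mp hπweak))
    have hgrpinf : @IsTopologicalAddGroup E (τ ⊓ π) _ := topologicalAddGroup_inf hτgrp hπgrp
    have hsmulinf : @ContinuousSMul ℝ E _ _ (τ ⊓ π) := by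
      rw [inf_eq_iInf]
      refine continuousSMul_iInf fun b => ?_
      cases b <;> assumption
    have hW : U ∩ V ∈ @nhds E (τ ⊓ π) 0 := by
      rw [nhds_inf (t₁ := τ) (t₂ := π)]
      have memnhds : ∀ (σ : TopologicalSpace E) (W : Set E), IsOpen[σ] W → (0 : E) ∈ W →
          W ∈ @nhds E σ 0 := by
        intro σ W hWo hW0
        letI := σ
        exact hWo.mem_nhds hW0
      exact Filter.inter_mem_inf (memnhds τ U hUo hU0) (memnhds π V hVo hV0)
    refine aux_le_norm (τ ⊓ π) hgrpinf hsmulinf hW ?_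
    intro x hx hx1
    have hmem : x ∈ U ∩ V ∩ {e : E | ‖e‖ = 1} := ⟨hx, hx1⟩
    rw [hUVS] at hmem
    exact hmem
  tfae_have 3 → 1 := by
    intro h
    rw [h]
    exact zero_notMem_closure_sphere
  tfae_finish
end

section
/- Let E be a real normed space, let τ be a linear topology on E weaker than the norm topology, and let ρ be a continuous seminorm on E, with π the topology induced by ρ. Then τ ∨ π equals the norm topology on E if and only if there exists δ > 0 such that 0 is τ-separated from the set {e ∈ E : ‖e‖ = 1, ρ(e) ≤ δ}. -/
open Topology

lemma aux_cont {E : Type*} [AddCommGroup E] [Module ℝ E] (τ : TopologicalSpace E)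
    (hτgrp : @IsTopologicalAddGroup E τ _) (hτsmul : @ContinuousSMul ℝ E _ _ τ)
    (c : ℝ) (x : E) : Continuous[τ, τ] (fun y => c • (y - x)) := by
  letI := τ
  exact (continuous_id.sub continuous_const).const_smul c

lemma aux_nhds_norm_ball {E : Type*} [NormedAddCommGroup E] [NormedSpace ℝ E]
    (ρ : Seminorm ℝ E) (hρ : Continuous (ρ : E → ℝ)) (x : E) {ε : ℝ} (hε : 0 < ε) :
    {y : E | ρ (y - x) < ε} ∈ 𝓝 x := by
  have hop : IsOpen {y : E | ρ (y - x) < ε} :=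
    isOpen_lt (hρ.comp (continuous_id.sub continuous_const)) continuous_const
  refine hop.mem_nhds ?_
  simp only [Set.mem_setOf_eq, sub_self, map_zero]
  exact hε

lemma aux_bal {E : Type*} [AddCommGroup E] [Module ℝ E] (τ : TopologicalSpace E)
    (hτsmul : @ContinuousSMul ℝ E _ _ τ) {U : Set E} (hU : U ∈ @nhds E τ 0) :
    balancedCore ℝ U ∈ @nhds E τ 0 := by
  letI := τ
  exact balancedCore_mem_nhds_zero hU

/-- Let `τ` be a linear topology on a real normed space `E`, weaker than the norm topology,
let `ρ` be a continuous seminorm on `E`, and let `π` be the topology induced by `ρ`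
(characterized by: a set is `π`-open iff around each of its points it contains a `ρ`-ball).
Then the coarsest topology refining both `τ` and `π` (the infimum `τ ⊓ π` in Mathlib's order
on topologies) is the norm topology iff there is `δ > 0` such that `0` is `τ`-separated from
`{e : ‖e‖ = 1, ρ e ≤ δ}`. -/
theorem join_with_seminorm_topology_eq_norm_iff_separated
    {E : Type*} [NormedAddCommGroup E] [NormedSpace ℝ E]
    (τ π : TopologicalSpace E)
    (hτgrp : @IsTopologicalAddGroup E τ _) (hτsmul : @ContinuousSMul ℝ E _ _ τ)
    (hτweak : ∀ s : Set E, IsOpen[τ] s → IsOpen[normTopology E] s)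
    (ρ : Seminorm ℝ E)
    (hρ : Continuous[normTopology E, inferInstance] (ρ : E → ℝ))
    (hπ : ∀ s : Set E, IsOpen[π] s ↔ ∀ x ∈ s, ∃ ε > 0, {y : E | ρ (y - x) < ε} ⊆ s) :
    τ ⊓ π = normTopology E ↔
      ∃ δ > 0, ∃ U : Set E, IsOpen[τ] U ∧ (0 : E) ∈ U ∧
        U ∩ {e : E | ‖e‖ = 1 ∧ ρ e ≤ δ} = ∅ := by
  have hρ' : Continuous[normTopology E, inferInstance] (ρ : E → ℝ) := hρ
  constructor
  · -- forward direction
    intro h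
    have h1 : Metric.ball (0 : E) 1 ∈ @nhds E τ 0 ⊓ @nhds E π 0 := by
      rw [← nhds_inf, h]
      exact Metric.ball_mem_nhds 0 one_pos
    rw [Filter.mem_inf_iff] at h1
    obtain ⟨V, hV, P, hP, hVP⟩ := h1
    obtain ⟨s, hsP, hsopen, hs0⟩ := (@mem_nhds_iff E π 0 P).mp hP
    obtain ⟨ε, hε, hball⟩ := (hπ s).mp hsopen 0 hs0
    obtain ⟨U, hUV, hUopen, hU0⟩ := (@mem_nhds_iff E τ 0 V).mp hV
    refine ⟨ε / 2, by positivity, U, hUopen, hU0, ?_⟩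
    rw [Set.eq_empty_iff_forall_notMem]
    rintro e ⟨heU, he1, heδ⟩
    have heP : e ∈ P := hsP (hball (by simpa using lt_of_le_of_lt heδ (by linarith)))
    have : e ∈ Metric.ball (0 : E) 1 := by rw [hVP]; exact ⟨hUV heU, heP⟩
    simp [Metric.mem_ball, dist_zero_right, he1] at this
  · -- backward direction
    rintro ⟨δ, hδ, U, hUopen, hU0, hsep⟩
    set W := balancedCore ℝ U with hW
    have hWnhds : W ∈ @nhds E τ 0 :=
      aux_bal τ hτsmul ((@mem_nhds_iff E τ 0 U).mpr ⟨U, subset_rfl, hUopen, hU0⟩)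
    have hWU : W ⊆ U := balancedCore_subset U
    have hWbal : Balanced ℝ W := balancedCore_balanced U
    -- key claim
    have key : ∀ e ∈ W, ρ e < δ → ‖e‖ ≤ 1 := by
      intro e heW heρ
      by_contra hcon
      push_neg at hcon
      have hepos : (0 : ℝ) < ‖e‖ := lt_trans one_pos hcon
      set c : ℝ := ‖e‖⁻¹ with hc
      have hcnorm : ‖c‖ ≤ 1 := by
        rw [hc, Real.norm_eq_abs, abs_inv, abs_norm]
        rw [inv_le_one_iff₀]
        right; linarith
      have he'W : c • e ∈ W := hWbal.smul_mem hcnorm heW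
      have he'norm : ‖c • e‖ = 1 := by
        rw [norm_smul, hc, Real.norm_eq_abs, abs_inv, abs_norm]
        field_simp
      have he'ρ : ρ (c • e) ≤ δ := by
        have h2 : ρ (c • e) = ‖c‖ * ρ e := map_smul_eq_mul ρ c e
        rw [h2]
        calc ‖c‖ * ρ e ≤ 1 * ρ e :=
              mul_le_mul_of_nonneg_right hcnorm (apply_nonneg ρ e)
          _ = ρ e := one_mul _
          _ ≤ δ := le_of_lt heρ
      have : c • e ∈ U ∩ {e : E | ‖e‖ = 1 ∧ ρ e ≤ δ} := ⟨hWU he'W, he'norm, he'ρ⟩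
      rw [hsep] at this
      exact this
    -- now prove the topologies agree
    refine le_antisymm ?_ (le_inf ?_ ?_)
    · -- τ ⊓ π ≤ norm
      rw [le_iff_nhds]
      intro x
      rw [show @nhds E (τ ⊓ π) x = @nhds E τ x ⊓ @nhds E π x from @nhds_inf E τ π x]
      intro t ht
      obtain ⟨r, hr, hballt⟩ := Metric.mem_nhds_iff.mp ht
      -- τ-part
      have hA : (fun y => (2 / r) • (y - x)) ⁻¹' W ∈ @nhds E τ x := by
        have hcont := aux_cont τ hτgrp hτsmul (2 / r) x
        have hx0 : (fun y => (2 / r) • (y - x)) x = 0 := by simp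
        have htend : Filter.Tendsto (fun y => (2 / r) • (y - x)) (@nhds E τ x)
            (@nhds E τ 0) := by
          have h3 := @Continuous.tendsto E E τ τ _ hcont x
          simpa only [sub_self, smul_zero] using h3
        exact htend hWnhds
      -- π-part
      have hBopen : IsOpen[π] {y : E | ρ (y - x) < r / 2 * δ} := by
        rw [hπ]
        intro y hy
        simp only [Set.mem_setOf_eq] at hy
        refine ⟨r / 2 * δ - ρ (y - x), by linarith, ?_⟩
        intro z hz
        simp only [Set.mem_setOf_eq] at hz ⊢
        calc ρ (z - x) = ρ ((z - y) + (y - x)) := by rw [sub_add_sub_cancel]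
          _ ≤ ρ (z - y) + ρ (y - x) := map_add_le_add ρ _ _
          _ < (r / 2 * δ - ρ (y - x)) + ρ (y - x) := by linarith
          _ = r / 2 * δ := by ring
      have hB : {y : E | ρ (y - x) < r / 2 * δ} ∈ @nhds E π x := by
        refine (@mem_nhds_iff E π x _).mpr ⟨_, subset_rfl, hBopen, ?_⟩
        simp only [Set.mem_setOf_eq, sub_self, map_zero]
        positivity
      refine Filter.mem_of_superset (Filter.inter_mem_inf hA hB) ?_
      rintro y ⟨hyA, hyB⟩
      apply hballt
      simp only [Set.mem_preimage, Set.mem_setOf_eq] at hyA hyB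
      have hρw : ρ ((2 / r) • (y - x)) < δ := by
        rw [map_smul_eq_mul, Real.norm_eq_abs, abs_of_pos (by positivity)]
        calc (2 / r) * ρ (y - x) < (2 / r) * (r / 2 * δ) :=
              mul_lt_mul_of_pos_left hyB (by positivity)
          _ = δ := by field_simp
      have hnw : ‖(2 / r) • (y - x)‖ ≤ 1 := key _ hyA hρw
      rw [norm_smul, Real.norm_eq_abs, abs_of_pos (by positivity)] at hnw
      have hle : ‖y - x‖ ≤ r / 2 := by
        rw [div_mul_eq_mul_div, div_le_one hr] at hnw
        linarith
      rw [Metric.mem_ball, dist_eq_norm]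
      linarith
    · -- norm ≤ τ
      exact isOpen_implies_isOpen_iff.mp hτweak
    · -- norm ≤ π
      apply isOpen_implies_isOpen_iff.mp
      intro s hs
      rw [@isOpen_iff_mem_nhds E (normTopology E) s]
      intro x hx
      obtain ⟨ε, hε, hball⟩ := (hπ s).mp hs x hx
      exact Filter.mem_of_superset (aux_nhds_norm_ball ρ hρ' x hε) hball
end

section
/- Let E be a real normed space and let τ be a linear topology on E weaker than the norm topology. The following are equivalent: (i) τ equals the norm topology; (ii) 0 is τ-separated from the unit sphere S_E = {e ∈ E : ‖e‖ = 1}; (iii) the closed unit ball of E is not contained in the τ-closure of S_E. -/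
open Topology

open Pointwise

/-- IVT helper: if `‖x‖ ≤ 1` and `‖w‖ ≥ 2`, some point on the segment from `x` to `x + w` has
norm one. -/
lemma exists_norm_eq_one_aux {E : Type*} [NormedAddCommGroup E] [NormedSpace ℝ E]
    {x w : E} (hx : ‖x‖ ≤ 1) (hw : 2 ≤ ‖w‖) :
    ∃ t ∈ Set.Icc (0 : ℝ) 1, ‖x + t • w‖ = 1 := by
  have hf : ContinuousOn (fun t : ℝ => ‖x + t • w‖) (Set.Icc 0 1) := by fun_prop
  have h1 : (1 : ℝ) ∈ Set.Icc ‖x + (0 : ℝ) • w‖ ‖x + (1 : ℝ) • w‖ := by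
    constructor
    · simpa using hx
    · have h2 : ‖w‖ ≤ ‖x + w‖ + ‖x‖ := by
        simpa [add_sub_cancel_left] using norm_sub_le (x + w) x
      simp only [one_smul]
      linarith
  obtain ⟨t, htI, ht⟩ := intermediate_value_Icc zero_le_one hf h1
  exact ⟨t, htI, ht⟩

/-- For a linear topology `τ` on a real normed space `E`, weaker than the norm topology,
the following are equivalent: (i) `τ` is the norm topology; (ii) `0` is `τ`-separated from
the unit sphere; (iii) the closed unit ball is not contained in the `τ`-closure of the
unit sphere. -/
theorem topology_eq_norm_iff_separated_from_sphere
    {E : Type*} [NormedAddCommGroup E] [NormedSpace ℝ E]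
    (τ : TopologicalSpace E)
    (hτgrp : @IsTopologicalAddGroup E τ _) (hτsmul : @ContinuousSMul ℝ E _ _ τ)
    (hτweak : ∀ s : Set E, IsOpen[τ] s → IsOpen[normTopology E] s) :
    List.TFAE
      [ τ = normTopology E,
        ∃ U : Set E, IsOpen[τ] U ∧ (0 : E) ∈ U ∧ U ∩ {e : E | ‖e‖ = 1} = ∅,
        ¬ Metric.closedBall (0 : E) 1 ⊆ @closure E τ {e : E | ‖e‖ = 1} ] := by
  tfae_have 1 → 2 := by
    rintro rfl
    refine ⟨Metric.ball 0 1, Metric.isOpen_ball, Metric.mem_ball_self one_pos, ?_⟩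
    ext e
    simp only [Set.mem_inter_iff, Metric.mem_ball, dist_zero_right, Set.mem_setOf_eq,
      Set.mem_empty_iff_false, iff_false, not_and]
    intro h h1
    exact absurd h1 (ne_of_lt h)
  tfae_have 2 → 3 := by
    rintro ⟨U, hUo, hU0, hUS⟩ hsub
    letI := τ
    have h0 : (0 : E) ∈ closure {e : E | ‖e‖ = 1} :=
      hsub (Metric.mem_closedBall_self zero_le_one)
    rw [mem_closure_iff] at h0
    obtain ⟨e, heU, heS⟩ := h0 U hUo hU0
    have he : e ∈ U ∩ {e : E | ‖e‖ = 1} := ⟨heU, heS⟩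
    rw [hUS] at he
    exact he
  tfae_have 3 → 1 := by
    intro h3
    rw [Set.not_subset] at h3
    obtain ⟨x, hxB, hx⟩ := h3
    have hx1 : ‖x‖ ≤ 1 := by simpa using hxB
    have hnormgrp : @IsTopologicalAddGroup E (normTopology E) _ := by
      unfold normTopology; infer_instance
    have hballbasis := Metric.nhds_basis_ball (α := E) (x := (0 : E))
    letI := τ
    haveI := hτgrp
    haveI := hτsmul
    rw [mem_closure_iff] at hx
    push_neg at hx
    obtain ⟨V, hVo, hxV, hVS⟩ := hx
    have hVx : V ∈ 𝓝 x := hVo.mem_nhds hxV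
    have hV0 : (x + ·) ⁻¹' V ∈ 𝓝 (0 : E) := by
      rw [← map_add_left_nhds_zero x] at hVx
      exact hVx
    obtain ⟨W, ⟨hW0, hWbal⟩, hWV⟩ := (nhds_basis_balanced ℝ E).mem_iff.mp hV0
    have hWb : ∀ w ∈ W, ‖w‖ < 2 := by
      intro w hw
      by_contra hcon
      push_neg at hcon
      obtain ⟨t, htI, ht⟩ := exists_norm_eq_one_aux hx1 hcon
      have htw : t • w ∈ W :=
        hWbal t (by rw [Real.norm_eq_abs, abs_of_nonneg htI.1]; exact htI.2) ⟨w, hw, rfl⟩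
      have hmem : x + t • w ∈ V ∩ {e : E | ‖e‖ = 1} := ⟨hWV htw, ht⟩
      rw [hVS] at hmem
      exact hmem
    refine IsTopologicalAddGroup.ext hτgrp hnormgrp ?_
    refine le_antisymm ?_ (nhds_mono fun s hs => hτweak s hs)
    refine hballbasis.ge_iff.mpr fun ε hε => ?_
    have hc : (ε / 2 : ℝ) ≠ 0 := by positivity
    have hsmul : (ε / 2 : ℝ) • W ∈ 𝓝 (0 : E) := (set_smul_mem_nhds_zero_iff hc).mpr hW0
    refine Filter.mem_of_superset hsmul ?_
    rintro _ ⟨w, hw, rfl⟩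
    have hw2 := hWb w hw
    simp only [Metric.mem_ball, dist_zero_right, norm_smul, Real.norm_eq_abs,
      abs_of_pos (by positivity : (0 : ℝ) < ε / 2)]
    nlinarith
  tfae_finish
end

section
/- Let E be a real normed space, let τ be a linear topology on E weaker than the norm topology, and let F be a subspace of E. The following are equivalent: (i) 0 is τ-separated from the set S_F = {f ∈ F : ‖f‖ = 1}; (ii) the topology induced by τ on F coincides with the norm topology on F; (iii) the seminorm ρ_F(e) = dist(e, F) = inf{‖e − f‖ : f ∈ F} is τ-complementary on E. -/
open Topology Pointwise

section Aux

variable {E : Type*} [AddCommGroup E] [Module ℝ E]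

lemma aux_small (τ : TopologicalSpace E) (hg : @IsTopologicalAddGroup E τ _)
    (hs : @ContinuousSMul ℝ E _ _ τ)
    (N : E → ℝ) (hN : ∀ (c : ℝ) (x : E), N (c • x) = |c| * N x)
    (F : Submodule ℝ E)
    (U : Set E) (hU : U ∈ @nhds E τ 0)
    (hdisj : ∀ f ∈ F, f ∈ U → N f ≠ 1) :
    ∀ ε : ℝ, 0 < ε → ∃ V ∈ @nhds E τ 0, ∀ f ∈ F, f ∈ V → N f < ε := by
  letI := τ; haveI := hg; haveI := hs
  obtain ⟨V₀, ⟨hV₀, hbal⟩, hV₀U⟩ := (nhds_basis_balanced ℝ E).mem_iff.mp hU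
  have key : ∀ f ∈ F, f ∈ V₀ → N f < 1 := by
    intro f hf hfV
    by_contra h
    push_neg at h
    have hNf : (0 : ℝ) < N f := lt_of_lt_of_le one_pos h
    have hc : ‖(N f)⁻¹‖ ≤ 1 := by
      rw [Real.norm_eq_abs, abs_of_pos (inv_pos.mpr hNf)]
      exact inv_le_one_of_one_le₀ h
    have hmem : (N f)⁻¹ • f ∈ V₀ := hbal _ hc (Set.smul_mem_smul_set hfV)
    refine hdisj _ (F.smul_mem _ hf) (hV₀U hmem) ?_
    rw [hN, abs_of_pos (inv_pos.mpr hNf), inv_mul_cancel₀ hNf.ne']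
  intro ε hε
  refine ⟨ε • V₀, (set_smul_mem_nhds_zero_iff hε.ne').mpr hV₀, ?_⟩
  rintro f hf ⟨v, hv, rfl⟩
  have hvF : v ∈ F := by
    have := F.smul_mem (ε⁻¹ : ℝ) hf
    rwa [smul_smul, inv_mul_cancel₀ hε.ne', one_smul] at this
  have hv1 : N v < 1 := key v hvF hv
  calc N (ε • v) = |ε| * N v := hN ε v
    _ = ε * N v := by rw [abs_of_pos hε]
    _ < ε * 1 := by exact mul_lt_mul_of_pos_left hv1 hε
    _ = ε := mul_one ε

lemma aux_indgrp {G E : Type*} [AddGroup G] [AddGroup E] (τ : TopologicalSpace E)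
    (hg : @IsTopologicalAddGroup E τ _) (f : G →+ E) :
    @IsTopologicalAddGroup G (TopologicalSpace.induced f τ) _ := by
  letI := τ; haveI := hg
  exact topologicalAddGroup_induced f

end Aux

section Aux2

lemma aux_tag (G : Type*) [SeminormedAddCommGroup G] :
    @IsTopologicalAddGroup G (normTopology G) _ := by unfold normTopology; exact inferInstance

lemma aux_ballopen (G : Type*) [SeminormedAddCommGroup G] :
    IsOpen[normTopology G] (Metric.ball (0 : G) 1) := Metric.isOpen_ball

lemma aux_mem_nhds {G : Type*} [SeminormedAddCommGroup G] {s : Set G} :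
    s ∈ @nhds G (normTopology G) 0 ↔ ∃ ε > 0, Metric.ball (0 : G) ε ⊆ s :=
  Metric.mem_nhds_iff

lemma aux_preimage {E : Type*} [NormedAddCommGroup E] [NormedSpace ℝ E]
    (F : Submodule ℝ E) {t : Set E} (ht : t ∈ @nhds E (normTopology E) 0) :
    (Subtype.val : F → E) ⁻¹' t ∈ @nhds F (normTopology F) 0 :=
  continuous_subtype_val.continuousAt.preimage_mem_nhds ht

lemma aux_nhds_mono {E : Type*} [NormedAddCommGroup E] (τ : TopologicalSpace E)
    (hτweak : ∀ s : Set E, IsOpen[τ] s → IsOpen[normTopology E] s)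
    {s : Set E} (hs : s ∈ @nhds E τ 0) : s ∈ @nhds E (normTopology E) 0 :=
  nhds_mono (fun u hu => hτweak u hu) hs

end Aux2

/-- For a subspace `F` of a real normed space `E` and a linear topology `τ` on `E` weaker
than the norm topology, the following are equivalent: (i) `0` is `τ`-separated from the
unit sphere of `F`; (ii) the topology induced by `τ` on `F` coincides with the norm topology
of `F`; (iii) the distance-to-`F` seminorm `e ↦ dist(e, F)` is `τ`-complementary on `E`. -/
theorem subspace_separated_tfae
    {E : Type*} [NormedAddCommGroup E] [NormedSpace ℝ E]
    (τ : TopologicalSpace E)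
    (hτgrp : @IsTopologicalAddGroup E τ _) (hτsmul : @ContinuousSMul ℝ E _ _ τ)
    (hτweak : ∀ s : Set E, IsOpen[τ] s → IsOpen[normTopology E] s)
    (F : Submodule ℝ E) :
    List.TFAE
      [ ∃ U : Set E, IsOpen[τ] U ∧ (0 : E) ∈ U ∧
          U ∩ {f : E | f ∈ F ∧ ‖f‖ = 1} = ∅,
        TopologicalSpace.induced (Subtype.val : F → E) τ = normTopology F,
        ∃ δ > 0, ∃ U : Set E, IsOpen[τ] U ∧ (0 : E) ∈ U ∧
          U ∩ {e : E | ‖e‖ = 1 ∧ Metric.infDist e (F : Set E) ≤ δ} = ∅ ] := by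
  have hNsmul : ∀ (c : ℝ) (x : E), ‖c • x‖ = |c| * ‖x‖ := by
    intro c x; rw [norm_smul, Real.norm_eq_abs]
  tfae_have 1 → 3
  | ⟨U, hUo, hU0, hUdisj⟩ => by
    have hdisj : ∀ f ∈ F, f ∈ U → ‖f‖ ≠ 1 := fun f hf hfU h1 =>
      Set.eq_empty_iff_forall_notMem.mp hUdisj f ⟨hfU, hf, h1⟩
    obtain ⟨V, hV, hVsmall⟩ := aux_small τ hτgrp hτsmul _ hNsmul F U
      (hUo.mem_nhds hU0) hdisj (1/2) (by norm_num)
    obtain ⟨W, hW, hWadd⟩ := by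
      letI := τ; haveI := hτgrp
      exact exists_nhds_zero_half hV
    obtain ⟨r, hr, hball⟩ := aux_mem_nhds.mp (aux_nhds_mono τ hτweak hW)
    set r' : ℝ := min r (1/4) with hr'def
    have hr' : 0 < r' := lt_min hr (by norm_num)
    have hball' : Metric.ball (0 : E) r' ⊆ W :=
      (Metric.ball_subset_ball (min_le_left _ _)).trans hball
    obtain ⟨O, hOW, hOo, hO0⟩ := by
      letI := τ
      exact mem_nhds_iff.mp hW
    refine ⟨r'/2, by linarith, O, hOo, hO0, ?_⟩
    rw [Set.eq_empty_iff_forall_notMem]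
    rintro e ⟨heO, he1, hed⟩
    have hlt : Metric.infDist e (F : Set E) < r' := lt_of_le_of_lt hed (by linarith)
    obtain ⟨f, hfF, hdist⟩ := (Metric.infDist_lt_iff ⟨0, F.zero_mem⟩).mp hlt
    have hfW : f - e ∈ W := by
      apply hball'
      rw [Metric.mem_ball, dist_zero_right, ← dist_eq_norm, dist_comm]
      exact hdist
    have hfV : f ∈ V := by
      have := hWadd e (hOW heO) (f - e) hfW
      rwa [add_sub_cancel] at this
    have hsmall : ‖f‖ < 1/2 := hVsmall f hfF hfV
    have hbig : (3:ℝ)/4 < ‖f‖ := by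
      have h1 : ‖e‖ - ‖f‖ ≤ ‖e - f‖ := norm_sub_norm_le e f
      have h2 : ‖e - f‖ < r' := by rwa [← dist_eq_norm]
      have h3 : r' ≤ 1/4 := min_le_right _ _
      rw [he1] at h1
      linarith
    linarith
  tfae_have 3 → 1
  | ⟨δ, hδ, U, hUo, hU0, hdisj⟩ => by
    refine ⟨U, hUo, hU0, ?_⟩
    rw [Set.eq_empty_iff_forall_notMem]
    rintro x ⟨hxU, hxF, hx1⟩
    refine Set.eq_empty_iff_forall_notMem.mp hdisj x ⟨hxU, hx1, ?_⟩
    rw [Metric.infDist_zero_of_mem hxF]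
    exact hδ.le
  tfae_have 1 → 2
  | ⟨U, hUo, hU0, hUdisj⟩ => by
    have hdisj : ∀ f ∈ F, f ∈ U → ‖f‖ ≠ 1 := fun f hf hfU h1 =>
      Set.eq_empty_iff_forall_notMem.mp hUdisj f ⟨hfU, hf, h1⟩
    have hsmall := aux_small τ hτgrp hτsmul _ hNsmul F U (hUo.mem_nhds hU0) hdisj
    refine IsTopologicalAddGroup.ext
      (aux_indgrp τ hτgrp ⟨⟨(Subtype.val : F → E), rfl⟩, fun _ _ => rfl⟩)
      (aux_tag F) ?_
    rw [@nhds_induced E F τ (Subtype.val) 0]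
    have h0 : (Subtype.val : F → E) (0 : F) = 0 := rfl
    rw [h0]
    apply le_antisymm
    · intro s hs
      obtain ⟨ε, hε, hball⟩ := aux_mem_nhds.mp hs
      obtain ⟨V, hV, hVsmall⟩ := hsmall ε hε
      refine Filter.mem_comap.mpr ⟨V, hV, ?_⟩
      intro x hx
      apply hball
      rw [Metric.mem_ball, dist_zero_right]
      exact hVsmall x.val x.2 hx
    · intro s hs
      obtain ⟨t, ht, hsub⟩ := Filter.mem_comap.mp hs
      exact Filter.mem_of_superset (aux_preimage F (aux_nhds_mono τ hτweak ht)) hsub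
  tfae_have 2 → 1
  | h => by
    have hballopen := aux_ballopen F
    rw [← h] at hballopen
    obtain ⟨U, hUo, hUeq⟩ := isOpen_induced_iff.mp hballopen
    refine ⟨U, hUo, ?_, ?_⟩
    · have h00 : (0 : F) ∈ Metric.ball (0 : F) 1 := Metric.mem_ball_self one_pos
      rw [← hUeq] at h00
      exact h00
    · rw [Set.eq_empty_iff_forall_notMem]
      rintro x ⟨hxU, hxF, hx1⟩
      have hb : (⟨x, hxF⟩ : F) ∈ Metric.ball (0 : F) 1 := by
        rw [← hUeq]; exact hxU
      rw [Metric.mem_ball, dist_zero_right] at hb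
      have hnx : ‖(⟨x, hxF⟩ : F)‖ = ‖x‖ := rfl
      rw [hnx, hx1] at hb
      exact lt_irrefl 1 hb
  tfae_finish
end

section
/- Let E be a real normed space, let τ be a linear topology on E weaker than the norm topology, and let F be a real normed space. Suppose T : E → F is a continuous linear operator and δ > 0 is such that 0 is τ-separated from {e ∈ E : ‖e‖ = 1, ‖Te‖ ≤ δ}. Then every continuous linear operator S : E → F with ‖T − S‖ < δ is τ-complementary. Consequently, the set of τ-complementary operators is open in the space L(E, F) of continuous linear operators with the operator norm. -/
open Topology

/-- The space `L(E, F)` of norm-continuous linear operators between normed spaces,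
with the operator norm. (This abbreviation is elaborated with the norm topologies, so that
it is unaffected by auxiliary topologies present in the local context.) -/
abbrev CLM (E F : Type*) [NormedAddCommGroup E] [NormedSpace ℝ E]
    [NormedAddCommGroup F] [NormedSpace ℝ F] := E →L[ℝ] F

/-- A norm-continuous linear operator `S : E → F` is `τ`-complementary if there is `δ > 0`
such that `0` is `τ`-separated from `{e : ‖e‖ = 1, ‖S e‖ ≤ δ}`. -/
def IsTauComplementaryOp {E F : Type*} [NormedAddCommGroup E] [NormedSpace ℝ E]
    [NormedAddCommGroup F] [NormedSpace ℝ F] (τ : TopologicalSpace E)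
    (S : CLM E F) : Prop :=
  ∃ δ > 0, ∃ U : Set E, IsOpen[τ] U ∧ (0 : E) ∈ U ∧
    U ∩ {e : E | ‖e‖ = 1 ∧ ‖S e‖ ≤ δ} = ∅

/-- Let `τ` be a linear topology on a real normed space `E`, weaker than the norm topology,
and let `T : E → F` be continuous linear with `δ > 0` such that `0` is `τ`-separated from
`{e : ‖e‖ = 1, ‖T e‖ ≤ δ}`. Then every `S` with `‖T − S‖ < δ` is `τ`-complementary;
consequently, the set of `τ`-complementary operators is open in `L(E, F)`. -/
theorem tau_complementary_operators_open
    {E F : Type*} [NormedAddCommGroup E] [NormedSpace ℝ E]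
    [NormedAddCommGroup F] [NormedSpace ℝ F]
    (τ : TopologicalSpace E)
    (hτgrp : @IsTopologicalAddGroup E τ _) (hτsmul : @ContinuousSMul ℝ E _ _ τ)
    (hτweak : ∀ s : Set E, IsOpen[τ] s → IsOpen[normTopology E] s)
    (T : CLM E F) (δ : ℝ) (hδ : 0 < δ)
    (hsep : ∃ U : Set E, IsOpen[τ] U ∧ (0 : E) ∈ U ∧
      U ∩ {e : E | ‖e‖ = 1 ∧ ‖T e‖ ≤ δ} = ∅) :
    (∀ S : CLM E F, ‖T - S‖ < δ → IsTauComplementaryOp τ S) ∧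
    IsOpen[normTopology (CLM E F)] {S : CLM E F | IsTauComplementaryOp τ S} := by

  have key : ∀ (T' : CLM E F) (δ' : ℝ), 0 < δ' →
      (∃ U : Set E, IsOpen[τ] U ∧ (0:E) ∈ U ∧ U ∩ {e : E | ‖e‖ = 1 ∧ ‖T' e‖ ≤ δ'} = ∅) →
      ∀ S : CLM E F, ‖T' - S‖ < δ' → IsTauComplementaryOp τ S := by
    rintro T' δ' hδ' ⟨U, hU, h0, hE⟩ S hS
    refine ⟨δ' - ‖T' - S‖, by linarith, U, hU, h0, ?_⟩
    rw [Set.eq_empty_iff_forall_notMem]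
    rintro e ⟨heU, hnorm, hSe⟩
    have h1 : ‖T' e - S e‖ ≤ ‖T' - S‖ := by
      calc ‖T' e - S e‖ = ‖(T' - S) e‖ := by simp
        _ ≤ ‖T' - S‖ * ‖e‖ := (T' - S).le_opNorm e
        _ = ‖T' - S‖ := by rw [hnorm, mul_one]
    have h2 : ‖T' e‖ ≤ δ' := by
      calc ‖T' e‖ = ‖T' e - S e + S e‖ := by rw [sub_add_cancel]
        _ ≤ ‖T' e - S e‖ + ‖S e‖ := norm_add_le _ _
        _ ≤ ‖T' - S‖ + (δ' - ‖T' - S‖) := add_le_add h1 hSe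
        _ = δ' := by ring
    have : e ∈ U ∩ {e : E | ‖e‖ = 1 ∧ ‖T' e‖ ≤ δ'} := ⟨heU, hnorm, h2⟩
    rw [hE] at this
    exact this
  refine ⟨fun S hS => key T δ hδ hsep S hS, ?_⟩
  show IsOpen {S : CLM E F | IsTauComplementaryOp τ S}
  rw [Metric.isOpen_iff]
  rintro S ⟨δ', hδ', hU⟩
  refine ⟨δ', hδ', fun S' hS' => ?_⟩
  have : ‖S - S'‖ < δ' := by
    rw [← dist_eq_norm, dist_comm]
    exact hS'
  exact key S δ' hδ' hU S' this
end

section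
/- Let E and F be real Banach spaces, let τ be a linear topology on E weaker than the norm topology, and let T : E → F be a continuous linear operator with closed range. Then T is τ-complementary if and only if the topology induced by τ on ker T coincides with the norm topology on ker T. -/
open Topology

/-- Let `E`, `F` be real Banach spaces, `τ` a linear topology on `E` weaker than the norm
topology, and `T : E → F` a continuous linear operator with closed range. Then `T` is
`τ`-complementary (there is `δ > 0` such that `0` is `τ`-separated from
`{e : ‖e‖ = 1, ‖T e‖ ≤ δ}`) iff the topology induced by `τ` on `ker T` coincides with the
norm topology of `ker T`. -/
theorem closedRange_tau_complementary_iff_ker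
    {E F : Type*} [NormedAddCommGroup E] [NormedSpace ℝ E] [CompleteSpace E]
    [NormedAddCommGroup F] [NormedSpace ℝ F] [CompleteSpace F]
    (τ : TopologicalSpace E)
    (hτgrp : @IsTopologicalAddGroup E τ _) (hτsmul : @ContinuousSMul ℝ E _ _ τ)
    (hτweak : ∀ s : Set E, IsOpen[τ] s → IsOpen[normTopology E] s)
    (T : CLM E F) (hrange : IsClosed (LinearMap.range (T : E →ₗ[ℝ] F) : Set F)) :
    (∃ δ > 0, ∃ U : Set E, IsOpen[τ] U ∧ (0 : E) ∈ U ∧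
      U ∩ {e : E | ‖e‖ = 1 ∧ ‖T e‖ ≤ δ} = ∅) ↔
    TopologicalSpace.induced (Subtype.val : LinearMap.ker (T : E →ₗ[ℝ] F) → E) τ =
      normTopology (LinearMap.ker (T : E →ₗ[ℝ] F)) := by
  classical
  letI instE : TopologicalSpace E := UniformSpace.toTopologicalSpace
  have hle : normTopology E ≤ τ := by
    rw [TopologicalSpace.le_def]
    exact fun s hs => hτweak s hs
  have hback : normTopology (LinearMap.ker (T : E →ₗ[ℝ] F)) =
      (instTopologicalSpaceSubtype : TopologicalSpace (LinearMap.ker (T : E →ₗ[ℝ] F))) := rfl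
  constructor
  · rintro ⟨δ, hδ, U, hUopen, hU0, hUdisj⟩
    have hUnhds : U ∈ @nhds E τ 0 := by
      letI := τ; exact hUopen.mem_nhds hU0
    obtain ⟨V, ⟨hVmem, hVbal⟩, hVU⟩ :=
      (@nhds_basis_balanced ℝ E _ _ _ τ hτsmul _).mem_iff.mp hUnhds
    -- every element of `V ∩ ker T` has norm `< 1`
    have key : ∀ k : E, k ∈ LinearMap.ker (T : E →ₗ[ℝ] F) → k ∈ V → ‖k‖ < 1 := by
      intro k hk hkV
      by_contra h1
      push_neg at h1
      have hk0 : ‖k‖ ≠ 0 := by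
        intro h; rw [h] at h1; linarith
      have hwV : ‖k‖⁻¹ • k ∈ V := by
        refine hVbal.smul_mem ?_ hkV
        rw [norm_inv, norm_norm]
        exact inv_le_one_of_one_le₀ h1
      have hwn : ‖‖k‖⁻¹ • k‖ = 1 := by
        rw [norm_smul, norm_inv, norm_norm, inv_mul_cancel₀ hk0]
      have hTw : T (‖k‖⁻¹ • k) = 0 := by
        rw [map_smul, show T k = 0 from LinearMap.mem_ker.mp hk, smul_zero]
      have hmem : ‖k‖⁻¹ • k ∈ U ∩ {e : E | ‖e‖ = 1 ∧ ‖T e‖ ≤ δ} :=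
        ⟨hVU hwV, hwn, by rw [hTw, norm_zero]; exact le_of_lt hδ⟩
      rw [hUdisj] at hmem
      exact hmem
    have i1 : @IsTopologicalAddGroup (LinearMap.ker (T : E →ₗ[ℝ] F))
        (TopologicalSpace.induced (Subtype.val : LinearMap.ker (T : E →ₗ[ℝ] F) → E) τ) _ := by
      letI := τ
      haveI := hτgrp
      exact topologicalAddGroup_induced (LinearMap.ker (T : E →ₗ[ℝ] F)).subtype
    rw [hback]
    have i2 : @IsTopologicalAddGroup (LinearMap.ker (T : E →ₗ[ℝ] F))
        (instTopologicalSpaceSubtype : TopologicalSpace (LinearMap.ker (T : E →ₗ[ℝ] F))) _ := by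
      infer_instance
    refine IsTopologicalAddGroup.ext i1 i2 ?_
    have lhs : @nhds (LinearMap.ker (T : E →ₗ[ℝ] F))
        (TopologicalSpace.induced (Subtype.val : LinearMap.ker (T : E →ₗ[ℝ] F) → E) τ) 0 =
        Filter.comap Subtype.val (@nhds E τ 0) := by
      letI := τ; exact nhds_induced _ _
    rw [lhs]
    have h2 : @nhds (LinearMap.ker (T : E →ₗ[ℝ] F))
        (instTopologicalSpaceSubtype : TopologicalSpace (LinearMap.ker (T : E →ₗ[ℝ] F))) 0 =
        Filter.comap (Subtype.val : LinearMap.ker (T : E →ₗ[ℝ] F) → E) (𝓝 (0 : E)) := nhds_induced _ _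
    rw [h2]
    apply le_antisymm
    · refine ((Metric.nhds_basis_ball.comap (Subtype.val : LinearMap.ker (T : E →ₗ[ℝ] F) → E)).ge_iff).mpr ?_
      intro ε hε
      refine Filter.mem_comap.mpr ⟨(fun x : E => ε⁻¹ • x) ⁻¹' V, ?_, ?_⟩
      · have hcont : @Continuous E E τ τ (fun x => ε⁻¹ • x) := by
          letI := τ; haveI := hτsmul
          exact continuous_const_smul _
        have htend : Filter.Tendsto (fun x : E => ε⁻¹ • x) (@nhds E τ 0) (@nhds E τ 0) := by
          letI := τ
          have h := hcont.tendsto 0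
          rwa [smul_zero] at h
        exact htend hVmem
      · intro k hk
        have hker : ε⁻¹ • (k : E) ∈ LinearMap.ker (T : E →ₗ[ℝ] F) := Submodule.smul_mem _ _ k.2
        have hlt := key _ hker hk
        rw [norm_smul, norm_inv, Real.norm_eq_abs, abs_of_pos hε] at hlt
        have hkn : ‖(k : E)‖ < ε := by
          have := (inv_mul_lt_iff₀ hε).mp hlt
          simpa using this
        simpa [Set.mem_preimage, mem_ball_zero_iff] using hkn
    · exact Filter.comap_mono (nhds_mono hle)
  · intro htop
    haveI hcomp : CompleteSpace (LinearMap.range (T : E →ₗ[ℝ] F)) := hrange.completeSpace_coe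
    set T' : E →L[ℝ] (LinearMap.range (T : E →ₗ[ℝ] F)) :=
      T.codRestrict _ (fun x => LinearMap.mem_range_self (T : E →ₗ[ℝ] F) x) with hT'
    have hsurj : Function.Surjective T' := by
      intro y
      obtain ⟨x, hx⟩ := LinearMap.mem_range.mp y.2
      exact ⟨x, Subtype.ext hx⟩
    obtain ⟨C, hC, hCle⟩ := ContinuousLinearMap.exists_preimage_norm_le T' hsurj
    have hBopen : IsOpen[TopologicalSpace.induced (Subtype.val : LinearMap.ker (T : E →ₗ[ℝ] F) → E) τ]
        (Metric.ball (0 : LinearMap.ker (T : E →ₗ[ℝ] F)) (1/4)) := by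
      rw [htop]
      show IsOpen (Metric.ball (0 : LinearMap.ker (T : E →ₗ[ℝ] F)) (1/4))
      exact Metric.isOpen_ball
    obtain ⟨W, hWopen, hWeq⟩ : ∃ W, IsOpen[τ] W ∧
        Subtype.val ⁻¹' W = Metric.ball (0 : LinearMap.ker (T : E →ₗ[ℝ] F)) (1/4) := by
      letI := τ; exact isOpen_induced_iff.mp hBopen
    have hW0 : (0 : E) ∈ W := by
      have h0 : (0 : LinearMap.ker (T : E →ₗ[ℝ] F)) ∈ Subtype.val ⁻¹' W := by
        rw [hWeq]; exact Metric.mem_ball_self (by norm_num)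
      exact h0
    have hWnhds : W ∈ @nhds E τ 0 := by
      letI := τ; exact hWopen.mem_nhds hW0
    obtain ⟨V, hV, hVadd⟩ : ∃ V, V ∈ @nhds E τ 0 ∧ ∀ v ∈ V, ∀ w ∈ V, v + w ∈ W := by
      letI := τ
      haveI := hτgrp.toContinuousAdd
      exact exists_nhds_zero_half hWnhds
    obtain ⟨ε, hε, hball⟩ := Metric.mem_nhds_iff.mp (nhds_mono hle hV)
    set δ := min ε 1 / (2 * C) with hδdef
    have hm0 : 0 < min ε 1 := lt_min hε one_pos
    have hδ : 0 < δ := div_pos hm0 (by positivity)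
    have hCδ : C * δ = min ε 1 / 2 := by
      rw [hδdef]
      field_simp
    obtain ⟨O, hOsub, hOopen, hO0⟩ :
        ∃ O ⊆ V, IsOpen[τ] O ∧ (0 : E) ∈ O := by
      letI := τ
      exact mem_nhds_iff.mp hV
    refine ⟨δ, hδ, O, hOopen, hO0, ?_⟩
    rw [Set.eq_empty_iff_forall_notMem]
    rintro e ⟨heO, hen, heT⟩
    have heV : e ∈ V := hOsub heO
    obtain ⟨x, hx, hxle⟩ := hCle (T' e)
    have hT'norm : ‖T' e‖ = ‖T e‖ := rfl
    have hxnorm : ‖x‖ ≤ min ε 1 / 2 := by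
      rw [← hCδ]
      calc ‖x‖ ≤ C * ‖T' e‖ := hxle
        _ = C * ‖T e‖ := by rw [hT'norm]
        _ ≤ C * δ := by
            exact mul_le_mul_of_nonneg_left heT (le_of_lt hC)
    have hx2 : ‖x‖ < ε := by
      have h1 : min ε 1 ≤ ε := min_le_left _ _
      linarith
    have hxhalf : ‖x‖ ≤ 1 / 2 := by
      have h1 : min ε 1 ≤ 1 := min_le_right _ _
      linarith
    have hkmem : e - x ∈ LinearMap.ker (T : E →ₗ[ℝ] F) := by
      rw [LinearMap.mem_ker, map_sub, sub_eq_zero]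
      have hval := congrArg (Subtype.val) hx
      exact hval.symm
    have hkW : e - x ∈ W := by
      have hmx : -x ∈ V := by
        apply hball
        rw [mem_ball_zero_iff, norm_neg]
        exact hx2
      have h := hVadd e heV (-x) hmx
      rwa [← sub_eq_add_neg] at h
    have hkball : (⟨e - x, hkmem⟩ : LinearMap.ker (T : E →ₗ[ℝ] F)) ∈ Metric.ball (0 : LinearMap.ker (T : E →ₗ[ℝ] F)) (1/4) := by
      rw [← hWeq]
      exact hkW
    have h1 : ‖e - x‖ < 1/4 := by
      rw [mem_ball_zero_iff] at hkball
      exact hkball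
    have h2 : ‖e‖ - ‖x‖ ≤ ‖e - x‖ := norm_sub_norm_le e x
    rw [hen] at h2
    linarith
end

section
/- Let E and F be real Banach spaces and let T : E → F be a continuous linear operator. Then T is upper semi-Fredholm (its kernel is finite-dimensional and its range is closed) if and only if for every real Banach space H and every continuous linear operator S : H → E, compactness of the composition T ∘ S implies compactness of S. -/
universe u v

open scoped ENNReal NNReal

section Helpers

theorem compact_of_findim {H G : Type*} [NormedAddCommGroup H] [NormedSpace ℝ H]
    [NormedAddCommGroup G] [NormedSpace ℝ G] [FiniteDimensional ℝ G] (f : H →L[ℝ] G) :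
    IsCompactOperator f := by
  have h := isCompactOperator_iff_isCompact_closure_image_closedBall (𝕜₁ := ℝ) (𝕜₂ := ℝ)
    (f : H →ₗ[ℝ] G) zero_lt_one
  show IsCompactOperator ⇑(f : H →ₗ[ℝ] G)
  rw [h]
  exact (f.lipschitz.isBounded_image Metric.isBounded_closedBall).isCompact_closure

theorem isCompactOperator_smulRight {H G : Type*} [NormedAddCommGroup H] [NormedSpace ℝ H]
    [NormedAddCommGroup G] [NormedSpace ℝ G] (c : H →L[ℝ] ℝ) (v : G) :
    IsCompactOperator (c.smulRight v) := by
  have h1 := (compact_of_findim c).clm_comp (ContinuousLinearMap.toSpanSingleton ℝ v)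
  have h2 : ⇑(c.smulRight v) = ⇑(ContinuousLinearMap.toSpanSingleton ℝ v) ∘ ⇑c := by
    funext x; simp [ContinuousLinearMap.toSpanSingleton_apply]
  rw [h2]; exact h1

theorem isCompactOperator_finset_sum {ι H G : Type*} [NormedAddCommGroup H] [NormedSpace ℝ H]
    [NormedAddCommGroup G] [NormedSpace ℝ G] (s : Finset ι) (f : ι → (H →L[ℝ] G))
    (hf : ∀ i ∈ s, IsCompactOperator (f i)) :
    IsCompactOperator (∑ i ∈ s, f i) := by
  classical
  induction s using Finset.induction_on with
  | empty =>
      rw [Finset.sum_empty]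
      exact isCompactOperator_zero
  | @insert a s ha ih =>
      rw [Finset.sum_insert ha]
      exact (hf a (Finset.mem_insert_self a s)).add
        (ih fun i hi => hf i (Finset.mem_insert_of_mem hi))

end Helpers

section l1

variable {E : Type*} [NormedAddCommGroup E] [NormedSpace ℝ E] [CompleteSpace E]

local instance fact11 : Fact ((1:ℝ≥0∞) ≤ 1) := ⟨le_rfl⟩

omit [CompleteSpace E] in
theorem l1_summable_norm (a : lp (fun _ : ℕ => ℝ) 1) : Summable (fun n => ‖a n‖) := by
  have := ((lp.memℓp a).summable (by norm_num : 0 < (1:ℝ≥0∞).toReal))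
  simpa using this

omit [CompleteSpace E] in
theorem l1_tsum_norm (a : lp (fun _ : ℕ => ℝ) 1) : (∑' n, ‖a n‖) = ‖a‖ := by
  have := (lp.hasSum_norm (by norm_num : 0 < (1:ℝ≥0∞).toReal) a).tsum_eq
  simpa using this

omit [CompleteSpace E] in
theorem l1_norm_smul_le (u : ℕ → E) (hu : ∀ n, ‖u n‖ ≤ 1) (a : lp (fun _ : ℕ => ℝ) 1) (n : ℕ) :
    ‖a n • u n‖ ≤ ‖a n‖ := by
  rw [norm_smul]
  calc ‖a n‖ * ‖u n‖ ≤ ‖a n‖ * 1 := by have := hu n; gcongr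
    _ = ‖a n‖ := mul_one _

theorem l1_summable_smul (u : ℕ → E) (hu : ∀ n, ‖u n‖ ≤ 1) (a : lp (fun _ : ℕ => ℝ) 1) :
    Summable (fun n => a n • u n) := by
  apply Summable.of_norm
  exact Summable.of_nonneg_of_le (fun n => norm_nonneg _) (l1_norm_smul_le u hu a)
    (l1_summable_norm a)

noncomputable def l1op (u : ℕ → E) (hu : ∀ n, ‖u n‖ ≤ 1) : lp (fun _ : ℕ => ℝ) 1 →L[ℝ] E :=
  LinearMap.mkContinuous
    { toFun := fun a => ∑' n, a n • u n
      map_add' := by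
        intro a b
        show (∑' n, ((a + b) : lp _ _) n • u n) = _
        rw [← Summable.tsum_add (l1_summable_smul u hu a) (l1_summable_smul u hu b)]
        exact tsum_congr fun n => by
          rw [lp.coeFn_add]; simp [add_smul]
      map_smul' := by
        intro c a
        show (∑' n, ((c • a) : lp _ _) n • u n) = c • ∑' n, a n • u n
        rw [← ((l1_summable_smul u hu a).hasSum.const_smul c).tsum_eq]
        exact tsum_congr fun n => by
          rw [lp.coeFn_smul]; simp [smul_smul] }
    1
    (by
      intro a
      have hs : Summable (fun n => ‖a n • u n‖) :=
        Summable.of_nonneg_of_le (fun n => norm_nonneg _) (l1_norm_smul_le u hu a)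
          (l1_summable_norm a)
      calc ‖∑' n, a n • u n‖ ≤ ∑' n, ‖a n • u n‖ := norm_tsum_le_tsum_norm hs
        _ ≤ ∑' n, ‖a n‖ := Summable.tsum_le_tsum (l1_norm_smul_le u hu a) hs (l1_summable_norm a)
        _ = ‖a‖ := l1_tsum_norm a
        _ = 1 * ‖a‖ := (one_mul _).symm)

theorem l1op_apply (u : ℕ → E) (hu : ∀ n, ‖u n‖ ≤ 1) (a : lp (fun _ : ℕ => ℝ) 1) :
    l1op u hu a = ∑' n, a n • u n := rfl

theorem l1op_single (u : ℕ → E) (hu : ∀ n, ‖u n‖ ≤ 1) (n : ℕ) :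
    l1op u hu (lp.single 1 n (1:ℝ)) = u n := by
  rw [l1op_apply]
  rw [tsum_eq_single n]
  · rw [lp.single_apply_self, one_smul]
  · intro m hm
    rw [lp.single_apply_ne _ _ _ hm, zero_smul]

theorem l1_norm_single (n : ℕ) : ‖lp.single (E := fun _ : ℕ => ℝ) 1 n (1:ℝ)‖ = 1 := by
  have := lp.norm_single (E := fun _ : ℕ => ℝ) (p := 1) (by norm_num)
    n (1:ℝ)
  simpa using this

noncomputable def coordL (n : ℕ) : lp (fun _ : ℕ => ℝ) 1 →L[ℝ] ℝ :=
  LinearMap.mkContinuous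
    { toFun := fun a => a n
      map_add' := fun a b => congrFun (lp.coeFn_add a b) n
      map_smul' := fun c a => congrFun (lp.coeFn_smul c a) n }
    1
    (fun a => by
      have h := Summable.le_tsum (l1_summable_norm a) n (fun m _ => norm_nonneg _)
      rw [l1_tsum_norm] at h
      simpa using h)

theorem coordL_apply (n : ℕ) (a : lp (fun _ : ℕ => ℝ) 1) : coordL n a = a n := rfl

theorem l1op_compact (v : ℕ → E) (hv : ∀ n, ‖v n‖ ≤ (2⁻¹:ℝ)^n) (hv1 : ∀ n, ‖v n‖ ≤ 1) :
    IsCompactOperator (l1op v hv1) := by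
  set Q : ℕ → (lp (fun _ : ℕ => ℝ) 1 →L[ℝ] E) :=
    fun k => ∑ n ∈ Finset.range k, (coordL n).smulRight (v n) with hQ
  have hQc : ∀ k, IsCompactOperator (Q k) := by
    intro k
    have h := isCompactOperator_finset_sum (Finset.range k)
      (fun n => (coordL n).smulRight (v n))
      (fun n _ => isCompactOperator_smulRight _ _)
    rwa [← ContinuousLinearMap.coe_sum'] at h
  have hbound : ∀ k, ‖l1op v hv1 - Q k‖ ≤ (2⁻¹:ℝ)^k := by
    intro k
    refine ContinuousLinearMap.opNorm_le_bound _ (by positivity) fun a => ?_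
    have hsum := l1_summable_smul v hv1 a
    have hQa : Q k a = ∑ n ∈ Finset.range k, a n • v n := by
      simp [hQ, ContinuousLinearMap.sum_apply, coordL_apply]
    have hdiff : (l1op v hv1 - Q k) a = ∑' i, a (i + k) • v (i + k) := by
      rw [ContinuousLinearMap.sub_apply, l1op_apply, hQa,
        ← Summable.sum_add_tsum_nat_add k hsum]
      exact add_sub_cancel_left _ _
    rw [hdiff]
    have hsn : Summable (fun i => ‖a (i + k)‖) :=
      (summable_nat_add_iff k).mpr (l1_summable_norm a)
    have hle : ∀ i, ‖a (i + k) • v (i + k)‖ ≤ ‖a (i + k)‖ * (2⁻¹:ℝ)^k := by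
      intro i
      rw [norm_smul]
      have h1 : ‖v (i + k)‖ ≤ (2⁻¹:ℝ)^k := by
        refine le_trans (hv (i + k)) ?_
        exact pow_le_pow_of_le_one (by norm_num) (by norm_num) (Nat.le_add_left k i)
      exact mul_le_mul_of_nonneg_left h1 (norm_nonneg _) |>.trans_eq rfl
    have hsv : Summable (fun i => ‖a (i + k) • v (i + k)‖) :=
      Summable.of_nonneg_of_le (fun i => norm_nonneg _) hle (hsn.mul_right _)
    calc ‖∑' i, a (i + k) • v (i + k)‖ ≤ ∑' i, ‖a (i + k) • v (i + k)‖ :=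
          norm_tsum_le_tsum_norm hsv
      _ ≤ ∑' i, ‖a (i + k)‖ * (2⁻¹:ℝ)^k := Summable.tsum_le_tsum hle hsv (hsn.mul_right _)
      _ = (∑' i, ‖a (i + k)‖) * (2⁻¹:ℝ)^k := tsum_mul_right
      _ ≤ ‖a‖ * (2⁻¹:ℝ)^k := by
          refine mul_le_mul_of_nonneg_right ?_ (by positivity)
          have h2 := Summable.sum_add_tsum_nat_add k (l1_summable_norm a)
          have h3 : (0:ℝ) ≤ ∑ i ∈ Finset.range k, ‖a i‖ :=
            Finset.sum_nonneg fun i _ => norm_nonneg _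
          rw [l1_tsum_norm] at h2
          linarith
      _ = (2⁻¹:ℝ)^k * ‖a‖ := mul_comm _ _
  have htend : Filter.Tendsto Q Filter.atTop (nhds (l1op v hv1)) := by
    rw [tendsto_iff_norm_sub_tendsto_zero]
    refine squeeze_zero (fun k => norm_nonneg _) (fun k => ?_)
      (tendsto_pow_atTop_nhds_zero_of_lt_one (r := (2⁻¹:ℝ)) (by norm_num) (by norm_num))
    rw [norm_sub_rev]
    exact hbound k
  exact isCompactOperator_of_tendsto htend (Filter.Eventually.of_forall hQc)

theorem comp_l1op {F : Type*} [NormedAddCommGroup F] [NormedSpace ℝ F] [CompleteSpace F]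
    (T : E →L[ℝ] F) (u : ℕ → E) (hu : ∀ n, ‖u n‖ ≤ 1) (hu2 : ∀ n, ‖T (u n)‖ ≤ 1) :
    T.comp (l1op u hu) = l1op (fun n => T (u n)) hu2 := by
  refine ContinuousLinearMap.ext fun a => ?_
  rw [ContinuousLinearMap.comp_apply, l1op_apply, l1op_apply,
    T.map_tsum (l1_summable_smul u hu a)]
  exact tsum_congr fun n => by rw [map_smul]

end l1

theorem usf_forward
    {E : Type*} {F : Type*}
    [NormedAddCommGroup E] [NormedSpace ℝ E] [CompleteSpace E]
    [NormedAddCommGroup F] [NormedSpace ℝ F] [CompleteSpace F]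
    (T : E →L[ℝ] F)
    (hker : FiniteDimensional ℝ (LinearMap.ker T.toLinearMap))
    (hrange : IsClosed (LinearMap.range (T : E →ₗ[ℝ] F) : Set F))
    {H : Type*} [NormedAddCommGroup H] [NormedSpace ℝ H] [CompleteSpace H]
    (S : H →L[ℝ] E) (hTS : IsCompactOperator (T.comp S)) : IsCompactOperator S := by
  obtain ⟨P, hP⟩ := Submodule.ClosedComplemented.of_finiteDimensional (𝕜 := ℝ) (LinearMap.ker T.toLinearMap)
  set J : (LinearMap.ker T.toLinearMap) →L[ℝ] E := (LinearMap.ker T.toLinearMap).subtypeL with hJ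
  set S₁ : H →L[ℝ] E := J.comp (P.comp S) with hS₁def
  have hS₁ : IsCompactOperator S₁ := by
    have := (compact_of_findim (P.comp S)).clm_comp J
    simpa [hS₁def, Function.comp, ContinuousLinearMap.coe_comp'] using this
  set S₂ : H →L[ℝ] E := S - S₁ with hS₂def
  set N : Submodule ℝ E := LinearMap.ker P.toLinearMap with hN
  have hNclosed : IsClosed (N : Set E) := ContinuousLinearMap.isClosed_ker P
  have hS₂mem : ∀ h, S₂ h ∈ N := by
    intro h
    have : P (J (P (S h))) = P (S h) := hP (P (S h))
    simp only [hS₂def, hN, ContinuousLinearMap.sub_apply, LinearMap.mem_ker, map_sub,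
      hS₁def, ContinuousLinearMap.comp_apply, ContinuousLinearMap.coe_coe]
    rw [this, sub_self]
  haveI : CompleteSpace (LinearMap.range T.toLinearMap) := hrange.completeSpace_coe
  haveI : CompleteSpace N := hNclosed.completeSpace_coe
  set T₂ : N →L[ℝ] (LinearMap.range T.toLinearMap) :=
    (T.comp N.subtypeL).codRestrict (LinearMap.range T.toLinearMap)
      (fun x => LinearMap.mem_range_self _ _) with hT₂
  have hinj : LinearMap.ker T₂.toLinearMap = ⊥ := by
    rw [Submodule.eq_bot_iff]
    rintro ⟨x, hxN⟩ hx
    have hxker : x ∈ LinearMap.ker T.toLinearMap := by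
      have : T x = 0 := by
        have := congrArg Subtype.val hx
        exact this
      simpa [LinearMap.mem_ker] using this
    have h1 : P x = ⟨x, hxker⟩ := hP ⟨x, hxker⟩
    have h2 : P x = 0 := hxN
    have : x = 0 := by
      have := congrArg Subtype.val (h1.symm.trans h2)
      simpa using this
    simp [this]
  have hsurj : LinearMap.range T₂.toLinearMap = ⊤ := by
    rw [Submodule.eq_top_iff']
    rintro ⟨y, x, rfl⟩
    have hmem : x - J (P x) ∈ N := by
      have : P (J (P x)) = P x := hP (P x)
      simp only [hN, LinearMap.mem_ker, ContinuousLinearMap.coe_coe, map_sub, this, sub_self]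
    refine ⟨⟨x - J (P x), hmem⟩, ?_⟩
    apply Subtype.ext
    have : T (J (P x)) = 0 := (P x).2
    change T (x - J (P x)) = T x
    simp [map_sub, this]
  set e := ContinuousLinearEquiv.ofBijective T₂ hinj hsurj with he
  have hTS₂ : IsCompactOperator (T.comp S₂) := by
    have heq : T.comp S₂ = T.comp S := by
      ext h
      have : T (J (P (S h))) = 0 := (P (S h)).2
      simp [hS₂def, hS₁def, map_sub, this]
    rw [heq]; exact hTS
  set W : H →L[ℝ] (LinearMap.range T.toLinearMap) :=
    (T.comp S₂).codRestrict (LinearMap.range T.toLinearMap) (fun h => LinearMap.mem_range_self _ _) with hW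
  have hWc : IsCompactOperator W :=
    hTS₂.codRestrict (V := LinearMap.range T.toLinearMap) (fun h => ⟨S₂ h, rfl⟩) hrange
  set S₂c : H →L[ℝ] N := S₂.codRestrict N hS₂mem with hS₂c
  have key : S₂c = (e.symm : (LinearMap.range T.toLinearMap) →L[ℝ] N).comp W := by
    refine ContinuousLinearMap.ext fun h => ContinuousLinearEquiv.injective e ?_
    rw [ContinuousLinearMap.comp_apply]
    rw [ContinuousLinearEquiv.coe_coe, e.apply_symm_apply]
    apply Subtype.ext
    show ((e (S₂c h) : LinearMap.range T.toLinearMap) : F) = ((W h : LinearMap.range T.toLinearMap) : F)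
    have h1 : e (S₂c h) = T₂ (S₂c h) := rfl
    rw [h1]
    rfl
  have hS₂cc : IsCompactOperator S₂c := by
    rw [key]
    have := hWc.clm_comp (e.symm : (LinearMap.range T.toLinearMap) →L[ℝ] N)
    simpa [Function.comp, ContinuousLinearMap.coe_comp'] using this
  have hS₂ : IsCompactOperator S₂ := by
    have := hS₂cc.clm_comp N.subtypeL
    have hfun : ⇑S₂ = ⇑N.subtypeL ∘ ⇑S₂c := rfl
    rw [hfun]; exact this
  have : S = S₁ + S₂ := by ext h; simp [hS₂def]
  rw [this]
  have hfun : ⇑(S₁ + S₂) = ⇑S₁ + ⇑S₂ := rfl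
  rw [hfun]
  exact hS₁.add hS₂

/-- A continuous linear operator `T` between real Banach spaces is upper semi-Fredholm
(finite-dimensional kernel and closed range) iff for every real Banach space `H` and every
continuous linear operator `S : H → E`, compactness of `T ∘ S` implies compactness of `S`. -/
theorem usf_iff_compact_factor
    {E : Type u} {F : Type v}
    [NormedAddCommGroup E] [NormedSpace ℝ E] [CompleteSpace E]
    [NormedAddCommGroup F] [NormedSpace ℝ F] [CompleteSpace F]
    (T : E →L[ℝ] F) :
    (FiniteDimensional ℝ (LinearMap.ker (T : E →ₗ[ℝ] F)) ∧ IsClosed (LinearMap.range (T : E →ₗ[ℝ] F) : Set F)) ↔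
      ∀ (H : Type u) [NormedAddCommGroup H] [NormedSpace ℝ H] [CompleteSpace H],
        ∀ S : H →L[ℝ] E, IsCompactOperator (T.comp S) → IsCompactOperator S := by
  haveI : Fact ((1:ℝ≥0∞) ≤ 1) := ⟨le_rfl⟩
  constructor
  · rintro ⟨hker, hrange⟩ H _ _ _ S hTS
    exact usf_forward T hker hrange S hTS
  · intro hyp
    -- Step 1: the kernel is finite dimensional
    haveI hkerC : CompleteSpace (LinearMap.ker T.toLinearMap) :=
      (ContinuousLinearMap.isClosed_ker T).completeSpace_coe
    have hker : FiniteDimensional ℝ (LinearMap.ker T.toLinearMap) := by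
      set S : (LinearMap.ker T.toLinearMap) →L[ℝ] E := (LinearMap.ker T.toLinearMap).subtypeL with hS
      have hTS : IsCompactOperator (T.comp S) := by
        have h0 : T.comp S = 0 := by ext x; exact x.2
        rw [h0]
        exact isCompactOperator_zero
      have hSc := hyp (LinearMap.ker T.toLinearMap) S hTS
      have hK : IsCompact (closure (⇑S '' Metric.closedBall 0 1)) :=
        IsCompactOperator.isCompact_closure_image_closedBall
          (𝕜₁ := ℝ) (𝕜₂ := ℝ) (f := (S : (LinearMap.ker T.toLinearMap) →ₗ[ℝ] E)) hSc 1
      have hball : Metric.closedBall (0 : LinearMap.ker T.toLinearMap) 1 ⊆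
          Subtype.val ⁻¹' (closure (⇑S '' Metric.closedBall 0 1)) :=
        fun x hx => subset_closure ⟨x, hx, rfl⟩
      have hpre : IsCompact (Subtype.val ⁻¹'
          (closure (⇑S '' Metric.closedBall 0 1)) : Set (LinearMap.ker T.toLinearMap)) :=
        ((ContinuousLinearMap.isClosed_ker T).isClosedEmbedding_subtypeVal).isCompact_preimage hK
      have hcb : IsCompact (Metric.closedBall (0 : LinearMap.ker T.toLinearMap) 1) :=
        hpre.of_isClosed_subset Metric.isClosed_closedBall hball
      exact FiniteDimensional.of_isCompact_closedBall₀ ℝ zero_lt_one hcb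
    refine ⟨hker, ?_⟩
    -- Step 2: the range is closed
    obtain ⟨P, hP⟩ := Submodule.ClosedComplemented.of_finiteDimensional (𝕜 := ℝ) (LinearMap.ker T.toLinearMap)
    set N : Submodule ℝ E := LinearMap.ker P.toLinearMap with hN
    have hNclosed : IsClosed (N : Set E) := ContinuousLinearMap.isClosed_ker P
    haveI : CompleteSpace N := hNclosed.completeSpace_coe
    by_cases hc : ∃ c > 0, ∀ x ∈ N, c * ‖x‖ ≤ ‖T x‖
    · obtain ⟨c, hc0, hcb⟩ := hc
      set f : N →L[ℝ] F := T.comp N.subtypeL with hf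
      have hanti : AntilipschitzWith (Real.toNNReal c⁻¹) f := by
        refine ContinuousLinearMap.antilipschitz_of_bound f fun x => ?_
        have h1 : c * ‖x‖ ≤ ‖f x‖ := by
          have := hcb (x : E) x.2
          simpa [hf] using this
        have h2 : ((Real.toNNReal c⁻¹ : ℝ≥0) : ℝ) = c⁻¹ :=
          Real.coe_toNNReal c⁻¹ (le_of_lt (inv_pos.mpr hc0))
        rw [h2]
        have h3 : c * ‖x‖ ≤ c * (c⁻¹ * ‖f x‖) := by
          rw [← mul_assoc, mul_inv_cancel₀ hc0.ne', one_mul]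
          exact h1
        exact le_of_mul_le_mul_left h3 hc0
      have hcr : IsClosed (Set.range f) := hanti.isClosed_range f.uniformContinuous
      have heq : (LinearMap.range (T : E →ₗ[ℝ] F) : Set F) = Set.range f := by
        ext y
        constructor
        · rintro ⟨x, rfl⟩
          have hmem : x - ((LinearMap.ker T.toLinearMap).subtypeL (P x)) ∈ N := by
            have : P ((LinearMap.ker T.toLinearMap).subtypeL (P x)) = P x := hP (P x)
            simp only [hN, LinearMap.mem_ker, ContinuousLinearMap.coe_coe, map_sub, this, sub_self]
          refine ⟨⟨x - ((LinearMap.ker T.toLinearMap).subtypeL (P x)), hmem⟩, ?_⟩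
          have hTP : T ((LinearMap.ker T.toLinearMap).subtypeL (P x)) = 0 := (P x).2
          show T (x - ((LinearMap.ker T.toLinearMap).subtypeL (P x))) = T x
          rw [map_sub, hTP, sub_zero]
        · rintro ⟨x, rfl⟩
          exact ⟨x, rfl⟩
      rw [heq]
      exact hcr
    · exfalso
      push_neg at hc
      have hx : ∀ n : ℕ, ∃ z : E, z ∈ N ∧ ‖z‖ = 1 ∧ ‖T z‖ < (2⁻¹:ℝ)^n := by
        intro n
        obtain ⟨z, hzN, hzlt⟩ := hc ((2⁻¹:ℝ)^n) (by positivity)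
        have hz0 : z ≠ 0 := by
          rintro rfl
          simp at hzlt
        have hzpos : (0:ℝ) < ‖z‖ := norm_pos_iff.mpr hz0
        refine ⟨‖z‖⁻¹ • z, N.smul_mem _ hzN, ?_, ?_⟩
        · rw [norm_smul, norm_inv, norm_norm, inv_mul_cancel₀ hzpos.ne']
        · rw [map_smul, norm_smul, norm_inv, norm_norm]
          rw [inv_mul_lt_iff₀ hzpos]
          calc ‖T z‖ < (2⁻¹:ℝ)^n * ‖z‖ := hzlt
            _ = ‖z‖ * (2⁻¹:ℝ)^n := mul_comm _ _
      choose x hxN hxnorm hxlt using hx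
      have hu1 : ∀ n, ‖x n‖ ≤ 1 := fun n => le_of_eq (hxnorm n)
      set S0 := l1op x hu1 with hS0
      have hv : ∀ n, ‖T (x n)‖ ≤ (2⁻¹:ℝ)^n := fun n => (hxlt n).le
      have hv1 : ∀ n, ‖T (x n)‖ ≤ 1 := fun n =>
        (hv n).trans (pow_le_one₀ (by norm_num) (by norm_num))
      have hcompTS0 : IsCompactOperator (T.comp S0) := by
        rw [hS0, comp_l1op T x hu1 hv1]
        exact l1op_compact _ hv hv1
      set eU : ULift.{u} (lp (fun _ : ℕ => ℝ) 1) ≃L[ℝ] lp (fun _ : ℕ => ℝ) 1 :=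
        ContinuousLinearEquiv.ulift with heU
      set S : ULift.{u} (lp (fun _ : ℕ => ℝ) 1) →L[ℝ] E :=
        S0.comp (eU : ULift.{u} (lp (fun _ : ℕ => ℝ) 1) →L[ℝ] lp (fun _ : ℕ => ℝ) 1) with hSdef
      have hTS : IsCompactOperator (T.comp S) := by
        have h1 := hcompTS0.comp_clm
          (eU : ULift.{u} (lp (fun _ : ℕ => ℝ) 1) →L[ℝ] lp (fun _ : ℕ => ℝ) 1)
        have h2 : ⇑(T.comp S) = ⇑(T.comp S0) ∘
            ⇑(eU : ULift.{u} (lp (fun _ : ℕ => ℝ) 1) →L[ℝ] lp (fun _ : ℕ => ℝ) 1) := rfl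
        rw [h2]; exact h1
      have hSc := hyp (ULift.{u} (lp (fun _ : ℕ => ℝ) 1)) S hTS
      have hK : IsCompact (closure (⇑S '' Metric.closedBall 0 1)) :=
        IsCompactOperator.isCompact_closure_image_closedBall
          (𝕜₁ := ℝ) (𝕜₂ := ℝ) (f := (S : ULift.{u} (lp (fun _ : ℕ => ℝ) 1) →ₗ[ℝ] E)) hSc 1
      have hmem : ∀ n, x n ∈ closure (⇑S '' Metric.closedBall 0 1) := by
        intro n
        apply subset_closure
        refine ⟨ULift.up (lp.single 1 n (1:ℝ)), ?_, ?_⟩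
        · rw [Metric.mem_closedBall, dist_zero_right]
          show ‖lp.single (E := fun _ : ℕ => ℝ) 1 n (1:ℝ)‖ ≤ 1
          rw [l1_norm_single]
        · show S0 (eU (ULift.up (lp.single 1 n (1:ℝ)))) = x n
          have : eU (ULift.up (lp.single 1 n (1:ℝ))) = lp.single 1 n (1:ℝ) := rfl
          rw [this, hS0, l1op_single]
      obtain ⟨z, hzK, φ, hφ, hconv⟩ := hK.tendsto_subseq hmem
      have hzN : z ∈ N :=
        hNclosed.mem_of_tendsto hconv (Filter.Eventually.of_forall fun n => hxN _)
      have hz1 : ‖z‖ = 1 := by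
        have h1 : Filter.Tendsto (fun n => ‖x (φ n)‖) Filter.atTop (nhds ‖z‖) := hconv.norm
        have h2 : Filter.Tendsto (fun n => ‖x (φ n)‖) Filter.atTop (nhds 1) := by
          simpa [hxnorm] using (tendsto_const_nhds : Filter.Tendsto (fun _ : ℕ => (1:ℝ))
            Filter.atTop (nhds 1))
        exact tendsto_nhds_unique h1 h2
      have hTz : T z = 0 := by
        have h1 : Filter.Tendsto (fun n => T (x (φ n))) Filter.atTop (nhds (T z)) :=
          (T.continuous.tendsto z).comp hconv
        have h2 : Filter.Tendsto (fun n => T (x (φ n))) Filter.atTop (nhds 0) := by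
          refine squeeze_zero_norm (fun n => ?_)
            (tendsto_pow_atTop_nhds_zero_of_lt_one (r := (2⁻¹:ℝ)) (by norm_num) (by norm_num))
          calc ‖T (x (φ n))‖ ≤ (2⁻¹:ℝ)^(φ n) := hv _
            _ ≤ (2⁻¹:ℝ)^n :=
              pow_le_pow_of_le_one (by norm_num) (by norm_num) (hφ.le_apply)
        exact tendsto_nhds_unique h1 h2
      have hzker : z ∈ LinearMap.ker T.toLinearMap := by simpa [LinearMap.mem_ker] using hTz
      have h1 : P z = ⟨z, hzker⟩ := hP ⟨z, hzker⟩
      have h2 : P z = 0 := hzN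
      have hz0 : z = 0 := by
        have := congrArg Subtype.val (h1.symm.trans h2)
        simpa using this
      rw [hz0] at hz1
      simp at hz1
end

section
/- Let E and F be real Banach spaces and let T : E → F be a continuous linear operator. Then T is upper semi-Fredholm (its kernel is finite-dimensional and its range is closed) if and only if T is complementary to the weak topology on E; that is, if and only if there exist δ > 0 and a weakly open neighborhood U of 0 in E such that no e ∈ E satisfies simultaneously ‖e‖ = 1, e ∈ U, and ‖Te‖ ≤ δ. -/
open Topology

/-- The weak topology on a real normed space `E`: the coarsest topology making every
norm-continuous linear functional on `E` continuous. (In Mathlib's order on topologies,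
where smaller means finer, this is the infimum of the topologies induced by the
functionals.) -/
def weakTopology (E : Type*) [NormedAddCommGroup E] [NormedSpace ℝ E] :
    TopologicalSpace E :=
  ⨅ f : E →L[ℝ] ℝ, TopologicalSpace.induced f inferInstance

lemma aux_sup_closed {F : Type*} [NormedAddCommGroup F] [NormedSpace ℝ F]
    (C W : Submodule ℝ F) (hC : IsClosed (C : Set F)) [FiniteDimensional ℝ W] :
    IsClosed ((C ⊔ W : Submodule ℝ F) : Set F) := by
  haveI : IsClosed (C : Set F) := hC
  have hcont : Continuous C.mkQ := continuous_quot_mk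
  haveI : FiniteDimensional ℝ (Submodule.map C.mkQ W) := Module.Finite.map W C.mkQ
  have hclosed : IsClosed ((Submodule.map C.mkQ W) : Set (F ⧸ C)) :=
    Submodule.closed_of_finiteDimensional _
  have : ((C ⊔ W : Submodule ℝ F) : Set F) = C.mkQ ⁻¹' (Submodule.map C.mkQ W) := by
    rw [← Submodule.comap_map_mkQ]; rfl
  rw [this]
  exact hclosed.preimage hcont


set_option maxHeartbeats 1600000 in
theorem mp_dir
    {E F : Type*} [NormedAddCommGroup E] [NormedSpace ℝ E] [CompleteSpace E]
    [NormedAddCommGroup F] [NormedSpace ℝ F] [CompleteSpace F]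
    (T : E →L[ℝ] F) (hfd : FiniteDimensional ℝ (LinearMap.ker (T : E →ₗ[ℝ] F)))
    (hcl : IsClosed (LinearMap.range (T : E →ₗ[ℝ] F) : Set F)) :
    ∃ δ > 0, ∃ U : Set E, IsOpen[weakTopology E] U ∧ (0 : E) ∈ U ∧
        ∀ e : E, ¬ (‖e‖ = 1 ∧ e ∈ U ∧ ‖T e‖ ≤ δ) := by
  obtain ⟨P, hP⟩ := Submodule.ClosedComplemented.of_finiteDimensional (LinearMap.ker (T : E →ₗ[ℝ] F))
  set Q : E →L[ℝ] E := (LinearMap.ker (T : E →ₗ[ℝ] F)).subtypeL.comp P with hQdef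
  have hQmem : ∀ x, Q x ∈ LinearMap.ker (T : E →ₗ[ℝ] F) := fun x => (P x).2
  have hPQ : ∀ x : E, P (Q x) = P x := by
    intro x
    have : Q x = ((P x : ↥(LinearMap.ker (T : E →ₗ[ℝ] F))) : E) := rfl
    rw [this, hP (P x)]
  have hQid : ∀ x, Q (Q x) = Q x := by
    intro x
    show ((P (Q x) : ↥(LinearMap.ker (T : E →ₗ[ℝ] F))) : E) = Q x
    rw [hPQ x]; rfl
  set V : Submodule ℝ E := LinearMap.ker (Q : E →ₗ[ℝ] E) with hVdef
  have hVclosed : IsClosed (V : Set E) := ContinuousLinearMap.isClosed_ker Q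
  haveI : CompleteSpace V := hVclosed.completeSpace_coe
  haveI : CompleteSpace (LinearMap.range (T : E →ₗ[ℝ] F)) := hcl.completeSpace_coe
  have hmemV : ∀ x : E, x - Q x ∈ V := by
    intro x
    simp only [hVdef, LinearMap.mem_ker, ContinuousLinearMap.coe_coe, map_sub, hQid x, sub_self]
  set S : ↥V →L[ℝ] F := T.comp V.subtypeL with hSdef
  have hSmem : ∀ v : ↥V, S v ∈ LinearMap.range (T : E →ₗ[ℝ] F) := fun v => ⟨(v : E), rfl⟩
  set S' : ↥V →L[ℝ] ↥(LinearMap.range (T : E →ₗ[ℝ] F)) := S.codRestrict _ hSmem with hS'def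
  have hker : LinearMap.ker (S' : ↥V →ₗ[ℝ] ↥(LinearMap.range (T : E →ₗ[ℝ] F))) = ⊥ := by
    rw [hS'def, ContinuousLinearMap.ker_codRestrict]
    rw [LinearMap.ker_eq_bot']
    intro v hv
    have hvker : (v : E) ∈ LinearMap.ker (T : E →ₗ[ℝ] F) := hv
    have h1 : Q (v : E) = (v : E) := by
      show ((P (v : E) : ↥(LinearMap.ker (T : E →ₗ[ℝ] F))) : E) = (v : E)
      have : P (v : E) = P ((⟨(v : E), hvker⟩ : ↥(LinearMap.ker (T : E →ₗ[ℝ] F))) : E) := rfl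
      rw [this, hP ⟨(v : E), hvker⟩]
    have h2 : Q (v : E) = 0 := v.2
    exact Subtype.ext (by rw [← h1, h2]; simp)
  have hTQ : ∀ x : E, T (x - Q x) = T x := by
    intro x
    rw [map_sub, show T (Q x) = 0 from hQmem x, sub_zero]
  have hrange : LinearMap.range (S' : ↥V →ₗ[ℝ] ↥(LinearMap.range (T : E →ₗ[ℝ] F))) = ⊤ := by
    rw [Submodule.eq_top_iff']
    rintro ⟨y, x, rfl⟩
    refine ⟨⟨x - Q x, hmemV x⟩, ?_⟩
    apply Subtype.ext
    show T (x - Q x) = T x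
    exact hTQ x
  set eqv := ContinuousLinearEquiv.ofBijective S' hker hrange with heqv
  set C : ℝ := ‖(eqv.symm : ↥(LinearMap.range (T : E →ₗ[ℝ] F)) →L[ℝ] ↥V)‖ with hCdef
  have hC0 : 0 ≤ C := norm_nonneg _
  have hbound : ∀ v : ↥V, ‖(v : E)‖ ≤ C * ‖T (v : E)‖ := by
    intro v
    have h := eqv.antilipschitz.le_mul_norm (map_zero eqv) v
    rw [coe_nnnorm] at h
    exact h
  -- basis of the kernel
  set n := Module.finrank ℝ ↥(LinearMap.ker (T : E →ₗ[ℝ] F)) with hn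
  set b := Module.finBasis ℝ ↥(LinearMap.ker (T : E →ₗ[ℝ] F)) with hb
  set φ : Fin n → (E →L[ℝ] ℝ) :=
    fun i => (LinearMap.toContinuousLinearMap (b.coord i)).comp P with hφ
  set M : ℝ := ∑ i, ‖((b i : ↥(LinearMap.ker (T : E →ₗ[ℝ] F))) : E)‖ with hM
  have hM0 : 0 ≤ M := Finset.sum_nonneg fun i _ => norm_nonneg _
  set ε : ℝ := 1 / (2 * (M + 1)) with hε
  have hεpos : 0 < ε := by positivity
  have hQsum : ∀ x : E, Q x = ∑ i, φ i x • ((b i : ↥(LinearMap.ker (T : E →ₗ[ℝ] F))) : E) := by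
    intro x
    have h1 : Q x = ((P x : ↥(LinearMap.ker (T : E →ₗ[ℝ] F))) : E) := rfl
    rw [h1, ← Module.Basis.sum_repr b (P x)]
    push_cast
    refine Finset.sum_congr rfl fun i _ => ?_
    congr 1
  have hQbound : ∀ x : E, (∀ i, |φ i x| < ε) → ‖Q x‖ ≤ 1 / 2 := by
    intro x hx
    calc ‖Q x‖ ≤ ∑ i, ‖φ i x • ((b i : ↥(LinearMap.ker (T : E →ₗ[ℝ] F))) : E)‖ := by
          rw [hQsum x]; exact norm_sum_le _ _
      _ ≤ ∑ i, ε * ‖((b i : ↥(LinearMap.ker (T : E →ₗ[ℝ] F))) : E)‖ := by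
          refine Finset.sum_le_sum fun i _ => ?_
          rw [norm_smul, Real.norm_eq_abs]
          exact mul_le_mul_of_nonneg_right (hx i).le (norm_nonneg _)
      _ = ε * M := by rw [hM, Finset.mul_sum]
      _ ≤ 1 / 2 := by
          rw [hε]
          rw [div_mul_eq_mul_div, one_mul, div_le_div_iff₀ (by positivity) (by norm_num)]
          nlinarith
  refine ⟨1 / (4 * (C + 1)), by positivity, ⋂ i, (φ i) ⁻¹' Metric.ball 0 ε, ?_, ?_, ?_⟩
  · refine @isOpen_iInter_of_finite E (Fin n) (weakTopology E) _ _ fun i => ?_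
    have h1 : IsOpen[TopologicalSpace.induced (φ i) inferInstance] ((φ i) ⁻¹' Metric.ball 0 ε) :=
      @isOpen_induced E ℝ _ (φ i) _ Metric.isOpen_ball
    exact h1.mono (iInf_le _ (φ i))
  · refine Set.mem_iInter.2 fun i => ?_
    simp [Metric.mem_ball, hεpos]
  · rintro e ⟨he1, heU, heT⟩
    have hφe : ∀ i, |φ i e| < ε := by
      intro i
      have := Set.mem_iInter.1 heU i
      simpa [Metric.mem_ball, Real.dist_eq] using this
    have hQe : ‖Q e‖ ≤ 1 / 2 := hQbound e hφe
    have hv : e - Q e ∈ V := hmemV e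
    have hnv : (1:ℝ) / 2 ≤ ‖e - Q e‖ := by
      have := norm_sub_norm_le e (Q e)
      rw [he1] at this
      linarith
    have hb1 : ‖e - Q e‖ ≤ C * ‖T (e - Q e)‖ := hbound ⟨e - Q e, hv⟩
    rw [hTQ e] at hb1
    have : C * ‖T e‖ ≤ C * (1 / (4 * (C + 1))) :=
      mul_le_mul_of_nonneg_left heT hC0
    have hfin : C * (1 / (4 * (C + 1))) ≤ 1 / 4 := by
      rw [mul_one_div, div_le_div_iff₀ (show (0:ℝ) < 4 * (C + 1) by positivity) (show (0:ℝ) < 4 by norm_num)]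
      nlinarith
    linarith

set_option maxHeartbeats 1600000 in
theorem mpr_dir
    {E F : Type*} [NormedAddCommGroup E] [NormedSpace ℝ E] [CompleteSpace E]
    [NormedAddCommGroup F] [NormedSpace ℝ F] [CompleteSpace F]
    (T : E →L[ℝ] F)
    (h : ∃ δ > 0, ∃ U : Set E, IsOpen[weakTopology E] U ∧ (0 : E) ∈ U ∧
        ∀ e : E, ¬ (‖e‖ = 1 ∧ e ∈ U ∧ ‖T e‖ ≤ δ)) :
    FiniteDimensional ℝ (LinearMap.ker (T : E →ₗ[ℝ] F)) ∧ IsClosed (LinearMap.range (T : E →ₗ[ℝ] F) : Set F) := by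
  obtain ⟨δ, hδ, U, hUopen, hU0, hU⟩ := h
  -- extract finite family of functionals
  obtain ⟨I, hIfin, key⟩ : ∃ I : Set (E →L[ℝ] ℝ), I.Finite ∧
      ∀ x : E, (∀ f ∈ I, f x = 0) → x ∈ U := by
    have hmem : U ∈ @nhds E (weakTopology E) 0 := by
      letI := weakTopology E
      exact hUopen.mem_nhds hU0
    rw [weakTopology, nhds_iInf] at hmem
    simp only [nhds_induced, map_zero] at hmem
    obtain ⟨I, hIfin, V, hV, hVuniv, hUeq, -⟩ := Filter.mem_iInf'.1 hmem
    refine ⟨I, hIfin, fun x hx => ?_⟩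
    rw [hUeq]
    refine Set.mem_iInter₂.2 fun f hf => ?_
    obtain ⟨W, hW, hWsub⟩ := Filter.mem_comap.1 (hV f)
    exact hWsub (by simp [Set.mem_preimage, hx f hf, mem_of_mem_nhds hW])
  haveI := hIfin.to_subtype
  haveI : Fintype ↥I := hIfin.fintype
  -- the key scaling fact
  have scale : ∀ x : E, x ≠ 0 → (∀ f ∈ I, f x = 0) → δ * ‖x‖ < ‖T x‖ := by
    intro x hx hfx
    have hxn : (0:ℝ) < ‖x‖ := norm_pos_iff.2 hx
    set u : E := ‖x‖⁻¹ • x with hu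
    have hun : ‖u‖ = 1 := by
      rw [hu, norm_smul, norm_inv, norm_norm, inv_mul_cancel₀ hxn.ne']
    have huU : u ∈ U := by
      refine key u fun f hf => ?_
      rw [hu, map_smul, hfx f hf, smul_zero]
    have := hU u
    push_neg at this
    have hTu : δ < ‖T u‖ := this hun huU
    have : ‖T u‖ = ‖x‖⁻¹ * ‖T x‖ := by
      rw [hu, map_smul, norm_smul, norm_inv, norm_norm]
    rw [this] at hTu
    calc δ * ‖x‖ < (‖x‖⁻¹ * ‖T x‖) * ‖x‖ := by
          exact mul_lt_mul_of_pos_right hTu hxn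
      _ = ‖T x‖ := by field_simp
  constructor
  · -- finite-dimensional kernel
    let Φ : ↥(LinearMap.ker (T : E →ₗ[ℝ] F)) →ₗ[ℝ] (↥I → ℝ) :=
      LinearMap.pi (fun f => ((f : E →L[ℝ] ℝ) : E →ₗ[ℝ] ℝ) ∘ₗ (LinearMap.ker (T : E →ₗ[ℝ] F)).subtype)
    have hinj : Function.Injective Φ := by
      rw [← LinearMap.ker_eq_bot, LinearMap.ker_eq_bot']
      intro x hx
      by_contra hx0
      have hx1 : (x : E) ≠ 0 := fun h => hx0 (Subtype.ext h)
      have hfx : ∀ f ∈ I, f (x : E) = 0 := fun f hf => congrFun hx ⟨f, hf⟩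
      have := scale (x : E) hx1 hfx
      have hTx : T (x : E) = 0 := x.2
      rw [hTx, norm_zero] at this
      have : (0:ℝ) < δ * ‖(x:E)‖ := mul_pos hδ (norm_pos_iff.2 hx1)
      linarith [scale (x : E) hx1 hfx, hTx]
    exact FiniteDimensional.of_injective Φ hinj
  · -- closed range
    let Φ' : E →ₗ[ℝ] (↥I → ℝ) := LinearMap.pi (fun f => ((f : E →L[ℝ] ℝ) : E →ₗ[ℝ] ℝ))
    set V' : Submodule ℝ E := LinearMap.ker Φ' with hV'
    have memV' : ∀ x, x ∈ V' ↔ ∀ f ∈ I, f x = 0 := by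
      intro x
      simp only [hV', LinearMap.mem_ker, Φ', LinearMap.pi_apply, funext_iff]
      constructor
      · intro h f hf; exact h ⟨f, hf⟩
      · intro h f; exact h f.1 f.2
    have hΦ'c : Continuous Φ' := continuous_pi fun f => (f.1).continuous
    have hV'closed : IsClosed (V' : Set E) := by
      have : (V' : Set E) = Φ' ⁻¹' {0} := by
        ext x; simp [hV', LinearMap.mem_ker]
      rw [this]; exact isClosed_singleton.preimage hΦ'c
    haveI : CompleteSpace V' := hV'closed.completeSpace_coe
    let g : ↥V' →L[ℝ] F := T.comp (Submodule.subtypeL V')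
    have hbound : ∀ v : ↥V', ‖v‖ ≤ (⟨δ⁻¹, (inv_pos.2 hδ).le⟩ : NNReal) * ‖g v‖ := by
      intro v
      rcases eq_or_ne v 0 with rfl | hv
      · simp
      · have hv1 : (v : E) ≠ 0 := fun h => hv (Subtype.ext h)
        have := scale (v : E) hv1 (fun f hf => (memV' _).1 v.2 f hf)
        have hgv : g v = T (v : E) := rfl
        have hnv : ‖v‖ = ‖(v : E)‖ := rfl
        rw [hgv, hnv]
        have hδ' : (0:ℝ) < δ := hδ
        show ‖(v:E)‖ ≤ δ⁻¹ * ‖T (v:E)‖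
        calc ‖(v:E)‖ = δ⁻¹ * (δ * ‖(v:E)‖) := by field_simp
          _ ≤ δ⁻¹ * ‖T (v:E)‖ := mul_le_mul_of_nonneg_left this.le (inv_pos.2 hδ).le
    have hanti := ContinuousLinearMap.antilipschitz_of_bound g hbound
    have hclosedrange : IsClosed (Set.range g) := hanti.isClosed_range g.uniformContinuous
    have hmapset : (Submodule.map (T : E →ₗ[ℝ] F) V' : Set F) = Set.range g := by
      ext y
      simp only [Submodule.mem_map, SetLike.mem_coe, Set.mem_range]
      constructor
      · rintro ⟨x, hx, rfl⟩; exact ⟨⟨x, hx⟩, rfl⟩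
      · rintro ⟨v, rfl⟩; exact ⟨v, v.2, rfl⟩
    obtain ⟨W, hW⟩ := Submodule.exists_isCompl V'
    haveI : FiniteDimensional ℝ (E ⧸ V') := (LinearMap.quotKerEquivRange Φ').symm.finiteDimensional
    haveI : FiniteDimensional ℝ W := (Submodule.quotientEquivOfIsCompl V' W hW).finiteDimensional
    haveI : FiniteDimensional ℝ (Submodule.map (T : E →ₗ[ℝ] F) W) := Module.Finite.map W (T : E →ₗ[ℝ] F)
    have : (LinearMap.range (T : E →ₗ[ℝ] F) : Set F) = ((Submodule.map (T : E →ₗ[ℝ] F) V' ⊔ Submodule.map (T : E →ₗ[ℝ] F) W : Submodule ℝ F) : Set F) := by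
      rw [← Submodule.map_sup, hW.sup_eq_top, ← LinearMap.range_eq_map]
    rw [this]
    exact aux_sup_closed _ _ (hmapset ▸ hclosedrange)

/-- A continuous linear operator `T` between real Banach spaces is upper semi-Fredholm
(finite-dimensional kernel and closed range) iff `T` is complementary to the weak topology
on `E`: there are `δ > 0` and a weakly open neighborhood `U` of `0` such that no `e` with
`‖e‖ = 1` lies in `U` and satisfies `‖T e‖ ≤ δ`. -/
theorem usf_iff_complements_weak_topology
    {E F : Type*} [NormedAddCommGroup E] [NormedSpace ℝ E] [CompleteSpace E]
    [NormedAddCommGroup F] [NormedSpace ℝ F] [CompleteSpace F]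
    (T : E →L[ℝ] F) :
    (FiniteDimensional ℝ (LinearMap.ker (T : E →ₗ[ℝ] F)) ∧ IsClosed (LinearMap.range (T : E →ₗ[ℝ] F) : Set F)) ↔
      ∃ δ > 0, ∃ U : Set E, IsOpen[weakTopology E] U ∧ (0 : E) ∈ U ∧
        ∀ e : E, ¬ (‖e‖ = 1 ∧ e ∈ U ∧ ‖T e‖ ≤ δ) := by
  exact ⟨fun h => mp_dir T h.1 h.2, fun h => mpr_dir T h⟩
end

section
/- Let F be a Banach lattice and let G ⊆ H be closed subspaces of F such that G has finite codimension in H (i.e., the quotient H/G is finite-dimensional). If G is dispersed, then H is dispersed; likewise, if G is anti-dispersed, then H is anti-dispersed. -/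
open Filter


section LatticeLemmas
variable {F : Type*} [NormedAddCommGroup F] [Lattice F] [IsOrderedAddMonoid F] [HasSolidNorm F]

lemma aux_inf_add_le {a b c : F} (ha : 0 ≤ a) (hb : 0 ≤ b) (hc : 0 ≤ c) :
    a ⊓ (b + c) ≤ a ⊓ b + a ⊓ c := by
  have h1 : a ⊓ b + a ⊓ c = ((a + a) ⊓ (a + c)) ⊓ ((b + a) ⊓ (b + c)) := by
    rw [inf_add, add_inf, add_inf]
  rw [h1]
  refine le_inf (le_inf ?_ ?_) (le_inf ?_ ?_)
  · exact inf_le_left.trans (le_add_of_nonneg_left ha)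
  · exact inf_le_left.trans (le_add_of_nonneg_right hc)
  · exact inf_le_left.trans (le_add_of_nonneg_left hb)
  · exact inf_le_right

lemma aux_disjoint_add {a b c : F} (ha : 0 ≤ a) (hb : 0 ≤ b) (hc : 0 ≤ c)
    (hac : a ⊓ c = 0) (hbc : b ⊓ c = 0) : (a + b) ⊓ c = 0 := by
  refine le_antisymm ?_ (le_inf (add_nonneg ha hb) hc)
  calc (a + b) ⊓ c = c ⊓ (a + b) := inf_comm _ _
    _ ≤ c ⊓ a + c ⊓ b := aux_inf_add_le hc ha hb
    _ = 0 := by rw [inf_comm c a, inf_comm c b, hac, hbc, add_zero]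

lemma aux_abs_le_of_disjoint {x y : F} (h : |x| ⊓ |y| = 0) : |x| ≤ |x - y| := by
  have h1 : |x| ≤ |x - y| + |y| := by
    have h2 := abs_add_le (x - y) y
    have h3 : x - y + y = x := by abel
    rwa [h3] at h2
  calc |x| = |x| ⊓ (|x - y| + |y|) := (inf_eq_left.2 h1).symm
    _ ≤ |x| ⊓ |x - y| + |x| ⊓ |y| := aux_inf_add_le (abs_nonneg x) (abs_nonneg _) (abs_nonneg y)
    _ = |x| ⊓ |x - y| := by rw [h, add_zero]
    _ ≤ |x - y| := inf_le_right

lemma aux_diff_disjoint {a b c d : F}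
    (hac : |a| ⊓ |c| = 0) (had : |a| ⊓ |d| = 0) (hbc : |b| ⊓ |c| = 0) (hbd : |b| ⊓ |d| = 0) :
    |a - b| ⊓ |c - d| = 0 := by
  refine le_antisymm ?_ (le_inf (abs_nonneg _) (abs_nonneg _))
  have h1 : (|a| + |b|) ⊓ (|c| + |d|) = 0 := by
    refine aux_disjoint_add (abs_nonneg a) (abs_nonneg b) (add_nonneg (abs_nonneg c) (abs_nonneg d)) ?_ ?_
    · rw [inf_comm]
      exact aux_disjoint_add (abs_nonneg c) (abs_nonneg d) (abs_nonneg a)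
        (by rw [inf_comm]; exact hac) (by rw [inf_comm]; exact had)
    · rw [inf_comm]
      exact aux_disjoint_add (abs_nonneg c) (abs_nonneg d) (abs_nonneg b)
        (by rw [inf_comm]; exact hbc) (by rw [inf_comm]; exact hbd)
  have key : ∀ u v : F, |u - v| ≤ |u| + |v| := fun u v => by
    have h2 := abs_add_le u (-v)
    rwa [abs_neg, ← sub_eq_add_neg] at h2
  exact le_trans (inf_le_inf (key a b) (key c d)) (le_of_eq h1)

end LatticeLemmas


section SmulLemmas
variable {F : Type*} [NormedAddCommGroup F] [Lattice F] [IsOrderedAddMonoid F] [HasSolidNorm F] [NormedSpace ℝ F]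

lemma aux_nonneg_of_pow_nsmul {x : F} (k : ℕ) (h : 0 ≤ 2 ^ k • x) : 0 ≤ x := by
  induction k generalizing x with
  | zero => simpa using h
  | succ k ih =>
      refine nsmul_two_semiclosed (ih ?_)
      have : 2 ^ (k + 1) • x = 2 ^ k • (2 • x) := by
        rw [← mul_nsmul']
        ring_nf
      rwa [this] at h

lemma aux_real_smul_nonneg {c : ℝ} {x : F} (hc : 0 ≤ c) (hx : 0 ≤ x) : 0 ≤ c • x := by
  set t : ℕ → ℝ := fun n => (⌈c * 2 ^ n⌉ : ℝ) / 2 ^ n with ht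
  have hpow : ∀ n : ℕ, (0:ℝ) < 2 ^ n := fun n => by positivity
  have h1 : ∀ n, 0 ≤ t n • x := by
    intro n
    have hceil : (0:ℤ) ≤ ⌈c * 2 ^ n⌉ := Int.ceil_nonneg (by positivity)
    refine aux_nonneg_of_pow_nsmul n ?_
    have h2 : (2 ^ n : ℕ) • (t n • x) = ⌈c * 2 ^ n⌉ • x := by
      rw [← Nat.cast_smul_eq_nsmul ℝ, smul_smul, ← Int.cast_smul_eq_zsmul ℝ]
      congr 1
      rw [ht]
      push_cast
      field_simp
    rw [h2]
    exact zsmul_nonneg hx hceil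
  have h2 : Tendsto t atTop (nhds c) := by
    have hub : ∀ n, t n ≤ c + (1/2) ^ n := by
      intro n
      rw [ht, div_le_iff₀ (hpow n)]
      have := (Int.ceil_lt_add_one (c * 2 ^ n)).le
      calc (⌈c * 2 ^ n⌉ : ℝ) ≤ c * 2 ^ n + 1 := this
        _ = (c + (1/2)^n) * 2 ^ n := by
            field_simp
            rw [mul_add, ← mul_pow, show (2:ℝ) * (1/2) = 1 by norm_num, one_pow, mul_comm]
        _ ≤ (c + (1/2)^n) * 2 ^ n := le_rfl
    have hlb : ∀ n, c ≤ t n := by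
      intro n
      rw [ht, le_div_iff₀ (hpow n)]
      exact Int.le_ceil _
    have hright : Tendsto (fun n : ℕ => c + (1/2:ℝ) ^ n) atTop (nhds c) := by
      have := tendsto_pow_atTop_nhds_zero_of_lt_one (by norm_num : (0:ℝ) ≤ 1/2) (by norm_num)
      simpa using (tendsto_const_nhds (x := c)).add this
    exact tendsto_of_tendsto_of_tendsto_of_le_of_le tendsto_const_nhds hright hlb hub
  have hclosed : IsClosed {s : ℝ | 0 ≤ s • x} :=
    isClosed_nonneg.preimage (continuous_id.smul continuous_const)
  exact hclosed.mem_of_tendsto h2 (Eventually.of_forall h1)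

lemma aux_smul_mono {c : ℝ} {x y : F} (hc : 0 ≤ c) (h : x ≤ y) : c • x ≤ c • y := by
  have := aux_real_smul_nonneg hc (sub_nonneg.2 h)
  rwa [smul_sub, sub_nonneg] at this

lemma aux_abs_smul_le {c : ℝ} {x : F} (hc : 0 ≤ c) : |c • x| ≤ c • |x| := by
  refine sup_le ?_ ?_
  · exact aux_smul_mono hc (le_abs_self x)
  · rw [← smul_neg]
    exact aux_smul_mono hc (neg_le_abs x)

lemma aux_smul_disjoint {c d : ℝ} {x y : F} (hc : 0 < c) (hd : 0 < d)
    (h : |x| ⊓ |y| = 0) : |c • x| ⊓ |d • y| = 0 := by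
  set M : ℝ := max c d with hM
  have hM0 : 0 < M := lt_max_of_lt_left hc
  have h1 : |c • x| ≤ M • |x| :=
    (aux_abs_smul_le hc.le).trans (by
      have := aux_real_smul_nonneg (sub_nonneg.2 (le_max_left c d)) (abs_nonneg x)
      rwa [sub_smul, sub_nonneg] at this)
  have h2 : |d • y| ≤ M • |y| :=
    (aux_abs_smul_le hd.le).trans (by
      have := aux_real_smul_nonneg (sub_nonneg.2 (le_max_right c d)) (abs_nonneg y)
      rwa [sub_smul, sub_nonneg] at this)
  have h3 : (M • |x|) ⊓ (M • |y|) ≤ M • (|x| ⊓ |y|) := by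
    have h4 : M⁻¹ • ((M • |x|) ⊓ (M • |y|)) ≤ |x| ⊓ |y| := by
      refine le_inf ?_ ?_
      · refine (aux_smul_mono (inv_nonneg.2 hM0.le) inf_le_left).trans ?_
        rw [smul_smul, inv_mul_cancel₀ hM0.ne', one_smul]
      · refine (aux_smul_mono (inv_nonneg.2 hM0.le) inf_le_right).trans ?_
        rw [smul_smul, inv_mul_cancel₀ hM0.ne', one_smul]
    have h5 := aux_smul_mono hM0.le h4
    rwa [smul_smul, mul_inv_cancel₀ hM0.ne', one_smul] at h5
  refine le_antisymm ?_ (le_inf (abs_nonneg _) (abs_nonneg _))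
  calc |c • x| ⊓ |d • y| ≤ (M • |x|) ⊓ (M • |y|) := inf_le_inf h1 h2
    _ ≤ M • (|x| ⊓ |y|) := h3
    _ = 0 := by rw [h, smul_zero]

end SmulLemmas

/-- A sequence in a Banach lattice is disjoint if its terms are pairwise disjoint. -/
def IsDisjointSeq {F : Type*} [NormedAddCommGroup F] [Lattice F] [IsOrderedAddMonoid F] [HasSolidNorm F] (f : ℕ → F) : Prop :=
  ∀ m n, m ≠ n → |f m| ⊓ |f n| = 0

/-- A sequence `e` of norm-one vectors of a set `H` in a Banach lattice is almost disjoint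
if there is a disjoint sequence `f` with `‖f n − e n‖ → 0`. -/
def IsAlmostDisjointSeq {F : Type*} [NormedAddCommGroup F] [Lattice F] [IsOrderedAddMonoid F] [HasSolidNorm F]
    (H : Set F) (e : ℕ → F) : Prop :=
  (∀ n, e n ∈ H) ∧ (∀ n, ‖e n‖ = 1) ∧
    ∃ f : ℕ → F, IsDisjointSeq f ∧ Tendsto (fun n => ‖f n - e n‖) atTop (nhds 0)

/-- A closed subspace of a Banach lattice is dispersed if it contains no almost disjoint
sequence. -/
def IsDispersed {F : Type*} [NormedAddCommGroup F] [Lattice F] [IsOrderedAddMonoid F] [HasSolidNorm F] [NormedSpace ℝ F]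
    (H : Submodule ℝ F) : Prop :=
  ¬ ∃ e : ℕ → F, IsAlmostDisjointSeq (H : Set F) e

/-- A closed subspace of a Banach lattice is anti-dispersed if every infinite-dimensional
closed subspace of it contains an almost disjoint sequence. -/
def IsAntiDispersed {F : Type*} [NormedAddCommGroup F] [Lattice F] [IsOrderedAddMonoid F] [HasSolidNorm F] [NormedSpace ℝ F]
    (H : Submodule ℝ F) : Prop :=
  ∀ K : Submodule ℝ F, K ≤ H → IsClosed (K : Set F) → ¬ FiniteDimensional ℝ K →
    ∃ e : ℕ → F, IsAlmostDisjointSeq (K : Set F) e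


private theorem aux_part1
    {F : Type*} [NormedAddCommGroup F] [Lattice F] [IsOrderedAddMonoid F] [HasSolidNorm F] [NormedSpace ℝ F] [CompleteSpace F]
    (G H : Submodule ℝ F) (hGH : G ≤ H)
    (hGclosed : IsClosed (G : Set F)) (hHclosed : IsClosed (H : Set F))
    (hcodim : FiniteDimensional ℝ (↥H ⧸ Submodule.comap H.subtype G)) :
    IsDispersed G → IsDispersed H := by
  intro hG hbad
  apply hG
  obtain ⟨e, heH, henorm, f, hdisj, hconv⟩ := hbad
  set G' : Submodule ℝ ↥H := Submodule.comap H.subtype G with hG'def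
  haveI hG'closed : IsClosed (G' : Set ↥H) := hGclosed.preimage continuous_subtype_val
  -- the sequence in the quotient
  set u : ℕ → ↥H ⧸ G' := fun n => G'.mkQ ⟨e n, heH n⟩ with hu_def
  have hu : ∀ n, u n ∈ Metric.closedBall (0 : ↥H ⧸ G') 1 := by
    intro n
    rw [Metric.mem_closedBall, dist_zero_right]
    have h1 : ‖u n‖ = ‖(Submodule.Quotient.mk (⟨e n, heH n⟩ : ↥H) : ↥H ⧸ G')‖ := rfl
    rw [h1]
    calc ‖(Submodule.Quotient.mk (⟨e n, heH n⟩ : ↥H) : ↥H ⧸ G')‖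
        ≤ ‖(⟨e n, heH n⟩ : ↥H)‖ := Submodule.Quotient.norm_mk_le G' _
      _ = 1 := henorm n
  obtain ⟨v, -, φ, hφ, hvlim⟩ := tendsto_subseq_of_bounded Metric.isBounded_closedBall hu
  set a : ℕ → ℕ := fun n => φ (2 * n) with ha_def
  set b : ℕ → ℕ := fun n => φ (2 * n + 1) with hb_def
  have hab : ∀ m n, a m ≠ b n := fun m n h => by
    have := hφ.injective h; omega
  have haa : ∀ m n, m ≠ n → a m ≠ a n := fun m n hmn h => by
    have := hφ.injective h; omega
  have hbb : ∀ m n, m ≠ n → b m ≠ b n := fun m n hmn h => by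
    have := hφ.injective h; omega
  set x : ℕ → ↥H := fun n => ⟨e (a n) - e (b n), sub_mem (heH _) (heH _)⟩ with hx_def
  have t2 : Tendsto (fun n : ℕ => 2 * n) atTop atTop :=
    StrictMono.tendsto_atTop (fun i j h => by omega)
  have t2' : Tendsto (fun n : ℕ => 2 * n + 1) atTop atTop :=
    StrictMono.tendsto_atTop (fun i j h => by omega)
  have ta : Tendsto a atTop atTop := hφ.tendsto_atTop.comp t2
  have tb : Tendsto b atTop atTop := hφ.tendsto_atTop.comp t2'
  have hqlim : Tendsto (fun n => G'.mkQ (x n)) atTop (nhds 0) := by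
    have h1 : Tendsto (fun n => u (a n)) atTop (nhds v) := hvlim.comp t2
    have h2 : Tendsto (fun n => u (b n)) atTop (nhds v) := hvlim.comp t2'
    have h3 : ∀ n, G'.mkQ (x n) = u (a n) - u (b n) := by
      intro n
      rw [hu_def, ← map_sub]
      rfl
    simp only [h3]
    have h4 := h1.sub h2
    rw [sub_self] at h4
    exact h4
  have hqn : Tendsto (fun n => ‖G'.mkQ (x n)‖) atTop (nhds 0) := by
    simpa using hqlim.norm
  -- choose good representatives
  have hy : ∀ n : ℕ, ∃ y : ↥H, Submodule.Quotient.mk y = G'.mkQ (x n) ∧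
      ‖y‖ < ‖G'.mkQ (x n)‖ + 1 / (n + 1) := by
    intro n
    exact Submodule.Quotient.norm_mk_lt _ (by positivity)
  choose y hy1 hy2 using hy
  set g : ℕ → ↥H := fun n => x n - y n with hg_def
  have hgmem : ∀ n, ((g n : F)) ∈ G := by
    intro n
    have h0 : G'.mkQ (g n) = 0 := by
      rw [hg_def]
      simp only [map_sub]
      have h1n := hy1 n
      rw [← Submodule.mkQ_apply] at h1n
      rw [h1n, sub_self]
    have h1 : g n ∈ G' := by
      rwa [← Submodule.Quotient.mk_eq_zero, ← Submodule.mkQ_apply]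
    exact h1
  have hxg : Tendsto (fun n => ‖(x n : F) - (g n : F)‖) atTop (nhds 0) := by
    have heq : ∀ n, ‖(x n : F) - (g n : F)‖ = ‖y n‖ := by
      intro n
      rw [hg_def]
      push_cast
      congr 1
      abel
    simp only [heq]
    refine squeeze_zero (fun n => norm_nonneg _) (fun n => (hy2 n).le) ?_
    simpa using hqn.add tendsto_one_div_add_atTop_nhds_zero_nat
  -- the disjoint differences
  set w : ℕ → F := fun n => f (a n) - f (b n) with hw_def
  have hwdisj : IsDisjointSeq w := by
    intro m n hmn
    exact aux_diff_disjoint (hdisj _ _ (haa m n hmn)) (hdisj _ _ (hab m n))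
      (hdisj _ _ (fun h => hab n m h.symm)) (hdisj _ _ (hbb m n hmn))
  have hwx : Tendsto (fun n => ‖w n - (x n : F)‖) atTop (nhds 0) := by
    refine squeeze_zero (fun n => norm_nonneg _)
      (g := fun n => ‖f (a n) - e (a n)‖ + ‖f (b n) - e (b n)‖) (fun n => ?_) ?_
    · have heq : w n - (x n : F) = (f (a n) - e (a n)) - (f (b n) - e (b n)) := by
        rw [hw_def, hx_def]
        push_cast
        abel
      rw [heq]
      exact norm_sub_le _ _
    · simpa using (hconv.comp ta).add (hconv.comp tb)
  have hfnorm : Tendsto (fun n => ‖f (a n)‖) atTop (nhds 1) := by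
    have hub : ∀ n, ‖f (a n)‖ ≤ 1 + ‖f (a n) - e (a n)‖ := by
      intro n
      calc ‖f (a n)‖ = ‖e (a n) + (f (a n) - e (a n))‖ := by congr 1; abel
        _ ≤ ‖e (a n)‖ + ‖f (a n) - e (a n)‖ := norm_add_le _ _
        _ = 1 + ‖f (a n) - e (a n)‖ := by rw [henorm]
    have hlb : ∀ n, 1 - ‖f (a n) - e (a n)‖ ≤ ‖f (a n)‖ := by
      intro n
      have h1 : ‖e (a n)‖ - ‖f (a n)‖ ≤ ‖f (a n) - e (a n)‖ := by
        rw [norm_sub_rev]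
        exact norm_sub_norm_le _ _
      rw [henorm] at h1
      linarith
    have hc : Tendsto (fun n => ‖f (a n) - e (a n)‖) atTop (nhds 0) := hconv.comp ta
    have h1 : Tendsto (fun n => 1 - ‖f (a n) - e (a n)‖) atTop (nhds 1) := by
      simpa using (tendsto_const_nhds (x := (1:ℝ))).sub hc
    have h2 : Tendsto (fun n => 1 + ‖f (a n) - e (a n)‖) atTop (nhds 1) := by
      simpa using (tendsto_const_nhds (x := (1:ℝ))).add hc
    exact tendsto_of_tendsto_of_tendsto_of_le_of_le h1 h2 hlb hub
  have hwlow : ∀ n, ‖f (a n)‖ ≤ ‖w n‖ :=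
    fun n => norm_le_norm_of_abs_le_abs (aux_abs_le_of_disjoint (hdisj _ _ (hab n n)))
  -- eventual lower bound for g
  have hev : ∀ᶠ n in atTop, (1:ℝ)/2 ≤ ‖(g n : F)‖ := by
    have h1 : Tendsto (fun n => ‖f (a n)‖ - ‖w n - (x n : F)‖ - ‖(x n : F) - (g n : F)‖)
        atTop (nhds 1) := by
      simpa using (hfnorm.sub hwx).sub hxg
    filter_upwards [h1.eventually_const_lt (by norm_num : (1:ℝ)/2 < 1)] with n hn
    have h2 : ‖w n‖ - ‖(x n : F)‖ ≤ ‖w n - (x n : F)‖ := norm_sub_norm_le _ _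
    have h3 : ‖(x n : F)‖ - ‖(g n : F)‖ ≤ ‖(x n : F) - (g n : F)‖ := norm_sub_norm_le _ _
    have h4 := hwlow n
    linarith
  obtain ⟨N, hN⟩ := eventually_atTop.1 hev
  have hgpos : ∀ n, (0:ℝ) < ‖(g (n + N) : F)‖ := fun n =>
    lt_of_lt_of_le (by norm_num) (hN (n + N) (by omega))
  set c : ℕ → ℝ := fun n => ‖(g (n + N) : F)‖⁻¹ with hc_def
  have hcpos : ∀ n, 0 < c n := fun n => inv_pos.2 (hgpos n)
  have hcle : ∀ n, c n ≤ 2 := by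
    intro n
    rw [hc_def]
    rw [inv_le_comm₀ (hgpos n) (by norm_num)]
    calc (2:ℝ)⁻¹ = 1/2 := by norm_num
      _ ≤ ‖(g (n + N) : F)‖ := hN (n + N) (by omega)
  refine ⟨fun n => c n • (g (n + N) : F), fun n => G.smul_mem _ (hgmem _), fun n => ?_,
    ⟨fun n => c n • w (n + N), fun m n hmn => ?_, ?_⟩⟩
  · rw [norm_smul, hc_def, norm_inv, norm_norm]
    exact inv_mul_cancel₀ (hgpos n).ne'
  · exact aux_smul_disjoint (hcpos m) (hcpos n) (hwdisj (m + N) (n + N) (by omega))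
  · refine squeeze_zero (fun n => norm_nonneg _)
      (g := fun n => 2 * (‖w (n + N) - (x (n + N) : F)‖ + ‖(x (n + N) : F) - (g (n + N) : F)‖))
      (fun n => ?_) ?_
    · have heq : c n • w (n + N) - c n • (g (n + N) : F) = c n • (w (n + N) - (g (n + N) : F)) :=
        (smul_sub (c n) (w (n + N)) ((g (n + N) : F))).symm
      rw [heq, norm_smul, Real.norm_eq_abs, abs_of_pos (hcpos n)]
      have h5 : ‖w (n + N) - (g (n + N) : F)‖ ≤
          ‖w (n + N) - (x (n + N) : F)‖ + ‖(x (n + N) : F) - (g (n + N) : F)‖ := by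
        have : w (n + N) - (g (n + N) : F) =
            (w (n + N) - (x (n + N) : F)) + ((x (n + N) : F) - (g (n + N) : F)) := by abel
        rw [this]
        exact norm_add_le _ _
      exact mul_le_mul (hcle n) h5 (norm_nonneg _) (by norm_num)
    · have hshift : Tendsto (fun n : ℕ => n + N) atTop atTop := tendsto_add_atTop_nat N
      have := ((hwx.comp hshift).add (hxg.comp hshift)).const_mul (2:ℝ)
      simpa using this

/-- If `G ⊆ H` are closed subspaces of a Banach lattice `F` with `G` of finite codimension
in `H`, then: if `G` is dispersed so is `H`, and if `G` is anti-dispersed so is `H`. -/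
theorem dispersed_of_finite_codim
    {F : Type*} [NormedAddCommGroup F] [Lattice F] [IsOrderedAddMonoid F] [HasSolidNorm F] [NormedSpace ℝ F] [CompleteSpace F]
    (G H : Submodule ℝ F) (hGH : G ≤ H)
    (hGclosed : IsClosed (G : Set F)) (hHclosed : IsClosed (H : Set F))
    (hcodim : FiniteDimensional ℝ (↥H ⧸ Submodule.comap H.subtype G)) :
    (IsDispersed G → IsDispersed H) ∧ (IsAntiDispersed G → IsAntiDispersed H) := by
  refine ⟨aux_part1 G H hGH hGclosed hHclosed hcodim, ?_⟩
  intro hG K hKH hKclosed hKfin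
  have hKGclosed : IsClosed ((K ⊓ G : Submodule ℝ F) : Set F) := by
    rw [Submodule.coe_inf]
    exact hKclosed.inter hGclosed
  have hKGfin : ¬ FiniteDimensional ℝ ↥(K ⊓ G : Submodule ℝ F) := by
    intro hfin
    apply hKfin
    set ψ : ↥K →ₗ[ℝ] (↥H ⧸ Submodule.comap H.subtype G) :=
      (Submodule.comap H.subtype G).mkQ.comp (Submodule.inclusion hKH) with hψ
    have hker : LinearMap.ker ψ = Submodule.comap K.subtype (K ⊓ G) := by
      ext x
      simp [hψ, LinearMap.mem_ker, Submodule.Quotient.mk_eq_zero, Submodule.mem_comap,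
        Submodule.coe_inclusion, x.2]
    have hkerfin : FiniteDimensional ℝ (LinearMap.ker ψ) := by
      rw [hker]
      exact (Submodule.comapSubtypeEquivOfLe (inf_le_left :
        (K ⊓ G : Submodule ℝ F) ≤ K)).symm.finiteDimensional
    have hrange : Module.rank ℝ (LinearMap.range ψ) < Cardinal.aleph0 :=
      lt_of_le_of_lt (Submodule.rank_le _) (Module.rank_lt_aleph0 ℝ _)
    have hrank : Module.rank ℝ ↥K < Cardinal.aleph0 := by
      rw [← LinearMap.rank_range_add_rank_ker ψ]
      exact Cardinal.add_lt_aleph0 hrange (Module.rank_lt_aleph0 ℝ _)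
    exact IsNoetherian.iff_fg.1 (IsNoetherian.iff_rank_lt_aleph0.2 hrank)
  obtain ⟨e, hmem, hnorm, hrest⟩ := hG (K ⊓ G) inf_le_right hKGclosed hKGfin
  exact ⟨e, fun n => (Submodule.mem_inf.1 (hmem n)).1, hnorm, hrest⟩
end

section
/- Let E be a closed subspace of ℓ∞ (the Banach lattice of bounded real sequences with the supremum norm and coordinatewise order) which is not dispersed. Then for every ε > 0 there exists a continuous injective linear operator T from c₀ (the space of real sequences converging to 0, with the supremum norm) into E such that (1 − ε)‖x‖ ≤ ‖Tx‖ ≤ (1 + ε)‖x‖ for every x ∈ c₀; in particular E contains a subspace isomorphic to c₀ with isomorphism constant arbitrarily close to 1. -/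
set_option maxHeartbeats 1000000
set_option synthInstance.maxHeartbeats 400000

open Filter ZeroAtInfty ENNReal

/-- `ℓ∞`: the Banach lattice of bounded real sequences with the supremum norm (the lattice
operations being coordinatewise). -/
noncomputable abbrev LinfSeq := lp (fun _ : ℕ => ℝ) ∞

/-- A sequence in `ℓ∞` is disjoint if its terms are pairwise disjoint, i.e. the pointwise
infima of their absolute values vanish. -/
def IsDisjointSeqLinf (f : ℕ → LinfSeq) : Prop :=
  ∀ m n, m ≠ n → ∀ k : ℕ, min |f m k| |f n k| = 0

lemma coord_sum (a : ℕ → ℝ) (g : ℕ → LinfSeq) (s : Finset ℕ) (j : ℕ) :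
    (↑(∑ i ∈ s, a i • g i) : ℕ → ℝ) j = ∑ i ∈ s, a i * g i j := by
  rw [lp.coeFn_sum, Finset.sum_apply]
  exact Finset.sum_congr rfl fun i _ => by rw [lp.coeFn_smul]; rfl

lemma disj_zero (g : ℕ → LinfSeq) (hg : ∀ m k, m ≠ k → ∀ j, min |g m j| |g k j| = 0)
    {i k j : ℕ} (hik : i ≠ k) (hgk : g k j ≠ 0) : g i j = 0 := by
  by_contra hne
  have h1 : (0:ℝ) < min |g i j| |g k j| := lt_min (abs_pos.2 hne) (abs_pos.2 hgk)
  rw [hg i k hik j] at h1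
  exact lt_irrefl _ h1

/-- The norm of a finite disjoint combination is bounded by the max of the individual norms. -/
lemma disjoint_sum_norm_le (g : ℕ → LinfSeq)
    (hg : ∀ m k, m ≠ k → ∀ j, min |g m j| |g k j| = 0)
    (a : ℕ → ℝ) (s : Finset ℕ) {C : ℝ} (hC : 0 ≤ C)
    (h : ∀ i ∈ s, |a i| * ‖g i‖ ≤ C) :
    ‖∑ i ∈ s, a i • g i‖ ≤ C := by
  apply lp.norm_le_of_forall_le hC
  intro j
  rw [Real.norm_eq_abs, coord_sum]
  by_cases hz : ∀ i ∈ s, g i j = 0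
  · rw [Finset.sum_eq_zero (fun i hi => by rw [hz i hi, mul_zero]), abs_zero]
    exact hC
  · push_neg at hz
    obtain ⟨k, hk, hgk⟩ := hz
    rw [Finset.sum_eq_single_of_mem k hk
      (fun i hi hik => by rw [disj_zero g hg hik hgk, mul_zero])]
    calc |a k * g k j| = |a k| * |g k j| := abs_mul _ _
      _ ≤ |a k| * ‖g k‖ := by
          apply mul_le_mul_of_nonneg_left _ (abs_nonneg _)
          simpa [Real.norm_eq_abs] using lp.norm_apply_le_norm top_ne_zero (g k) j
      _ ≤ C := h k hk

/-- Each term of a finite disjoint combination is dominated coordinatewise by the sum. -/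
lemma disjoint_single_le (g : ℕ → LinfSeq)
    (hg : ∀ m k, m ≠ k → ∀ j, min |g m j| |g k j| = 0)
    (a : ℕ → ℝ) (s : Finset ℕ) {k : ℕ} (hk : k ∈ s) (j : ℕ) :
    |a k * g k j| ≤ ‖∑ i ∈ s, a i • g i‖ := by
  by_cases hgk : g k j = 0
  · rw [hgk, mul_zero, abs_zero]; exact norm_nonneg _
  · have hco : ∑ i ∈ s, a i * g i j = a k * g k j :=
      Finset.sum_eq_single_of_mem k hk
        (fun i hi hik => by rw [disj_zero g hg hik hgk, mul_zero])
    calc |a k * g k j| = ‖(↑(∑ i ∈ s, a i • g i) : ℕ → ℝ) j‖ := by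
          rw [coord_sum, hco, Real.norm_eq_abs]
      _ ≤ ‖∑ i ∈ s, a i • g i‖ := lp.norm_apply_le_norm top_ne_zero _ j

lemma c0_abs_le_norm (x : C₀(ℕ, ℝ)) (k : ℕ) : |x k| ≤ ‖x‖ := by
  rw [← ZeroAtInftyContinuousMap.norm_toBCF_eq_norm]
  exact x.toBCF.norm_coe_le_norm k

lemma c0_norm_le (x : C₀(ℕ, ℝ)) {C : ℝ} (hC : 0 ≤ C) (h : ∀ k, |x k| ≤ C) : ‖x‖ ≤ C := by
  rw [← ZeroAtInftyContinuousMap.norm_toBCF_eq_norm]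
  exact (BoundedContinuousFunction.norm_le hC).2 h

lemma c0_tendsto (x : C₀(ℕ, ℝ)) : Tendsto (⇑x) atTop (nhds 0) := by
  have := ZeroAtInftyContinuousMap.zero_at_infty' x
  rwa [cocompact_eq_atTop] at this

lemma geo_summable : Summable (fun k : ℕ => (2⁻¹:ℝ) ^ (k+1)) := by
  simp_rw [pow_succ]
  exact (summable_geometric_of_lt_one (by norm_num) (by norm_num)).mul_right _

lemma geo_tsum : ∑' k : ℕ, (2⁻¹:ℝ) ^ (k+1) = 1 := by
  simp_rw [pow_succ]
  rw [tsum_mul_right, tsum_geometric_of_lt_one (by norm_num) (by norm_num)]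
  norm_num

/-- If a closed subspace `E` of `ℓ∞` is not dispersed (i.e. it contains an almost disjoint
sequence: norm-one vectors `e_n ∈ E` approximated by a disjoint sequence `f_n` of `ℓ∞`),
then for every `ε > 0` there is an injective continuous linear operator `T : c₀ → E` with
`(1 − ε)‖x‖ ≤ ‖T x‖ ≤ (1 + ε)‖x‖` for all `x`; in particular `E` contains an almost
isometric copy of `c₀`. (Here `c₀ = C₀(ℕ, ℝ)` is the space of real sequences vanishing at
infinity, with the supremum norm.) -/
theorem nondispersed_subspace_of_linf_contains_c0
    (E : Submodule ℝ LinfSeq) (hEclosed : IsClosed (E : Set LinfSeq))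
    (hnondisp : ∃ e : ℕ → LinfSeq, (∀ n, e n ∈ E) ∧ (∀ n, ‖e n‖ = 1) ∧
      ∃ f : ℕ → LinfSeq, IsDisjointSeqLinf f ∧
        Tendsto (fun n => ‖f n - e n‖) atTop (nhds 0)) :
    ∀ ε : ℝ, 0 < ε → ∃ T : C₀(ℕ, ℝ) →L[ℝ] E, Function.Injective T ∧
      ∀ x : C₀(ℕ, ℝ), (1 - ε) * ‖x‖ ≤ ‖T x‖ ∧ ‖T x‖ ≤ (1 + ε) * ‖x‖ := by
  intro ε hε
  obtain ⟨e, heE, henorm, f, hdisj, htend⟩ := hnondisp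
  set δ : ℝ := min (ε/2) 4⁻¹ with hδdef
  have hδpos : 0 < δ := lt_min (by linarith) (by norm_num)
  have hδ4 : δ ≤ 4⁻¹ := min_le_right _ _
  have hδε : 2*δ ≤ ε := by
    have h1 : δ ≤ ε/2 := min_le_left _ _
    linarith
  -- extract a rapidly approximating subsequence
  have hev : ∀ k : ℕ, ∀ᶠ m in atTop, ‖f m - e m‖ < δ * (2⁻¹:ℝ) ^ (k+1) :=
    fun k => htend.eventually_lt_const (by positivity)
  obtain ⟨n, hnmono, hn⟩ := extraction_forall_of_eventually hev
  set g : ℕ → LinfSeq := fun k => f (n k) with hgdef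
  set u : ℕ → LinfSeq := fun k => e (n k) with hudef
  set d : ℕ → LinfSeq := fun k => u k - g k with hddef
  have hpow1 : ∀ k : ℕ, (2⁻¹:ℝ) ^ (k+1) ≤ 1 :=
    fun k => pow_le_one₀ (by norm_num) (by norm_num)
  have hd : ∀ k, ‖d k‖ ≤ δ * (2⁻¹:ℝ) ^ (k+1) := by
    intro k
    calc ‖d k‖ = ‖e (n k) - f (n k)‖ := rfl
      _ = ‖f (n k) - e (n k)‖ := (norm_sub_rev _ _).symm
      _ ≤ δ * (2⁻¹:ℝ) ^ (k+1) := (hn k).le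
  have hdδ : ∀ k, ‖d k‖ ≤ δ := fun k => (hd k).trans
    (by nlinarith [hpow1 k, hδpos.le])
  have hgd : ∀ m k, m ≠ k → ∀ j, min |g m j| |g k j| = 0 :=
    fun m k hmk j => hdisj (n m) (n k) (fun h => hmk (hnmono.injective h)) j
  have hu1 : ∀ k, ‖u k‖ = 1 := fun k => henorm (n k)
  have hugd : ∀ k, u k = g k + d k := fun k => by
    show u k = g k + (u k - g k); abel
  have hgud : ∀ k, g k = u k - d k := fun k => by
    show g k = u k - (u k - g k); abel
  have hgnorm_ub : ∀ k, ‖g k‖ ≤ 1 + δ := by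
    intro k
    calc ‖g k‖ = ‖u k - d k‖ := by rw [← hgud]
      _ ≤ ‖u k‖ + ‖d k‖ := norm_sub_le _ _
      _ ≤ 1 + δ := by rw [hu1]; linarith [hdδ k]
  have hgnorm_lb : ∀ k, 1 - δ ≤ ‖g k‖ := by
    intro k
    have h1 : ‖u k‖ ≤ ‖g k‖ + ‖d k‖ := by
      rw [hugd k]; exact norm_add_le _ _
    rw [hu1] at h1
    linarith [hdδ k]
  have hg2 : ∀ k, ‖g k‖ ≤ 2 := fun k => (hgnorm_ub k).trans (by linarith)
  -- summability of the disjoint part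
  have hsumg : ∀ x : C₀(ℕ, ℝ), Summable (fun k => x k • g k) := by
    intro x
    rw [summable_iff_vanishing]
    intro V hV
    obtain ⟨r, hr, hball⟩ := Metric.mem_nhds_iff.1 hV
    have hev2 : ∀ᶠ k in atTop, |x k| < r/4 := by
      filter_upwards [(c0_tendsto x).eventually
        (Metric.ball_mem_nhds (0:ℝ) (by linarith : (0:ℝ) < r/4))] with k hk
      simpa [Real.dist_eq] using hk
    obtain ⟨N, hN⟩ := eventually_atTop.1 hev2
    refine ⟨Finset.range N, fun t ht => ?_⟩
    apply hball
    rw [Metric.mem_ball, dist_zero_right]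
    have hb : ‖∑ i ∈ t, x i • g i‖ ≤ (r/4) * 2 := by
      apply disjoint_sum_norm_le g hgd _ t (by linarith)
      intro i hi
      have hiN : N ≤ i := by
        by_contra hlt
        push_neg at hlt
        exact (Finset.disjoint_left.1 ht hi) (Finset.mem_range.2 hlt)
      exact mul_le_mul (hN i hiN).le (hg2 i) (norm_nonneg _) (by linarith)
    calc ‖∑ i ∈ t, x i • g i‖ ≤ (r/4)*2 := hb
      _ < r := by linarith
  -- summability of the perturbation part
  have hdnorm : ∀ (x : C₀(ℕ, ℝ)) k, ‖x k • d k‖ ≤ ‖x‖ * (δ * (2⁻¹:ℝ)^(k+1)) := by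
    intro x k
    rw [norm_smul]
    exact mul_le_mul (by simpa [Real.norm_eq_abs] using c0_abs_le_norm x k) (hd k)
      (norm_nonneg _) (norm_nonneg _)
  have hsumdn : ∀ x : C₀(ℕ, ℝ), Summable (fun k => ‖x k • d k‖) := by
    intro x
    exact Summable.of_nonneg_of_le (fun k => norm_nonneg _) (hdnorm x)
      ((geo_summable.mul_left δ).mul_left ‖x‖)
  have hsumd : ∀ x : C₀(ℕ, ℝ), Summable (fun k => x k • d k) :=
    fun x => (hsumdn x).of_norm
  have hsumu : ∀ x : C₀(ℕ, ℝ), Summable (fun k => x k • u k) := by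
    intro x
    have h1 : (fun k => x k • u k) = fun k => x k • g k + x k • d k := by
      funext k; rw [hugd k, smul_add]
    rw [h1]
    exact (hsumg x).add (hsumd x)
  have hTsplit : ∀ x : C₀(ℕ, ℝ),
      ∑' k, x k • u k = (∑' k, x k • g k) + ∑' k, x k • d k := by
    intro x
    rw [← Summable.tsum_add (hsumg x) (hsumd x)]
    exact tsum_congr fun k => by rw [hugd k, smul_add]
  -- norm bound on the perturbation part
  have hSd : ∀ x : C₀(ℕ, ℝ), ‖∑' k, x k • d k‖ ≤ δ * ‖x‖ := by
    intro x
    calc ‖∑' k, x k • d k‖ ≤ ∑' k, ‖x k • d k‖ := norm_tsum_le_tsum_norm (hsumdn x)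
      _ ≤ ∑' k, ‖x‖ * (δ * (2⁻¹:ℝ)^(k+1)) :=
          (hsumdn x).tsum_le_tsum (hdnorm x) ((geo_summable.mul_left δ).mul_left ‖x‖)
      _ = ‖x‖ * (δ * ∑' k, (2⁻¹:ℝ)^(k+1)) := by rw [tsum_mul_left, tsum_mul_left]
      _ = δ * ‖x‖ := by rw [geo_tsum]; ring
  -- norm bounds on the disjoint part
  have hSg_ub : ∀ x : C₀(ℕ, ℝ), ‖∑' k, x k • g k‖ ≤ (1+δ) * ‖x‖ := by
    intro x
    refine le_of_tendsto (hsumg x).hasSum.norm (Eventually.of_forall fun s => ?_)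
    apply disjoint_sum_norm_le g hgd _ s (by positivity)
    intro i _
    calc |x i| * ‖g i‖ ≤ ‖x‖ * (1+δ) :=
        mul_le_mul (c0_abs_le_norm x i) (hgnorm_ub i) (norm_nonneg _) (norm_nonneg _)
      _ = (1+δ) * ‖x‖ := mul_comm _ _
  have hSg_lb : ∀ x : C₀(ℕ, ℝ), (1-δ) * ‖x‖ ≤ ‖∑' k, x k • g k‖ := by
    intro x
    have hkey : ∀ k, |x k| * ‖g k‖ ≤ ‖∑' k, x k • g k‖ := by
      intro k
      have h1 : ‖x k • g k‖ ≤ ‖∑' k, x k • g k‖ := by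
        apply lp.norm_le_of_forall_le (norm_nonneg _)
        intro j
        have h2 : ∀ᶠ s in (atTop : Filter (Finset ℕ)),
            |x k * g k j| ≤ ‖∑ i ∈ s, x i • g i‖ := by
          filter_upwards [eventually_ge_atTop ({k} : Finset ℕ)] with s hs
          exact disjoint_single_le g hgd _ s (Finset.singleton_subset_iff.mp hs) j
        have h3 : ‖(x k • g k : LinfSeq) j‖ = |x k * g k j| := by
          rw [lp.coeFn_smul, Real.norm_eq_abs]; rfl
        rw [h3]
        exact ge_of_tendsto (hsumg x).hasSum.norm h2
      rwa [norm_smul, Real.norm_eq_abs] at h1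
    have h1δ : (0:ℝ) < 1 - δ := by linarith
    have h2 : ∀ k, |x k| ≤ ‖∑' k, x k • g k‖ / (1-δ) := by
      intro k
      rw [le_div_iff₀ h1δ]
      calc |x k| * (1-δ) ≤ |x k| * ‖g k‖ :=
          mul_le_mul_of_nonneg_left (hgnorm_lb k) (abs_nonneg _)
        _ ≤ _ := hkey k
    have h3 : ‖x‖ ≤ ‖∑' k, x k • g k‖ / (1-δ) :=
      c0_norm_le x (div_nonneg (norm_nonneg _) h1δ.le) h2
    calc (1-δ)*‖x‖ ≤ (1-δ)*(‖∑' k, x k • g k‖/(1-δ)) :=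
        mul_le_mul_of_nonneg_left h3 h1δ.le
      _ = ‖∑' k, x k • g k‖ := by field_simp
  -- the two-sided bound on the full sum
  have hub : ∀ x : C₀(ℕ, ℝ), ‖∑' k, x k • u k‖ ≤ (1+2*δ) * ‖x‖ := by
    intro x
    rw [hTsplit x]
    calc ‖(∑' k, x k • g k) + ∑' k, x k • d k‖
        ≤ ‖∑' k, x k • g k‖ + ‖∑' k, x k • d k‖ := norm_add_le _ _
      _ ≤ (1+δ)*‖x‖ + δ*‖x‖ := add_le_add (hSg_ub x) (hSd x)
      _ = (1+2*δ)*‖x‖ := by ring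
  have hlb : ∀ x : C₀(ℕ, ℝ), (1-2*δ) * ‖x‖ ≤ ‖∑' k, x k • u k‖ := by
    intro x
    have h1 : ‖∑' k, x k • g k‖ ≤ ‖∑' k, x k • u k‖ + ‖∑' k, x k • d k‖ := by
      have : (∑' k, x k • g k) = (∑' k, x k • u k) - ∑' k, x k • d k := by
        rw [hTsplit x]; abel
      rw [this]
      exact norm_sub_le _ _
    have h2 := hSg_lb x
    have h3 := hSd x
    linarith
  -- membership in E
  have hmem : ∀ x : C₀(ℕ, ℝ), (∑' k, x k • u k) ∈ E := by
    intro x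
    refine hEclosed.mem_of_tendsto (hsumu x).hasSum (Eventually.of_forall fun s => ?_)
    exact Submodule.sum_mem E fun i _ => E.smul_mem _ (heE (n i))
  -- the linear map
  obtain ⟨TL, hTLapply⟩ : ∃ TL : C₀(ℕ, ℝ) →ₗ[ℝ] E,
      ∀ x : C₀(ℕ, ℝ), (TL x : LinfSeq) = ∑' k, x k • u k := by
    refine ⟨{ toFun := fun x => ⟨∑' k, x k • u k, hmem x⟩
              map_add' := fun x y => Subtype.ext ?_
              map_smul' := fun c x => Subtype.ext ?_ }, fun x => rfl⟩
    · show ∑' k, (x+y) k • u k = (∑' k, x k • u k) + ∑' k, y k • u k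
      rw [← Summable.tsum_add (hsumu x) (hsumu y)]
      exact tsum_congr fun k => by
        have h : (x+y) k = x k + y k := rfl
        rw [h, add_smul]
    · show ∑' k, (c • x) k • u k = c • ∑' k, x k • u k
      rw [← Summable.tsum_const_smul c (hsumu x)]
      exact tsum_congr fun k => by
        have h : (c • x) k = c * x k := rfl
        rw [h, mul_smul]
  have hTLnorm : ∀ x : C₀(ℕ, ℝ), ‖TL x‖ = ‖∑' k, x k • u k‖ := by
    intro x
    rw [← hTLapply x]
    rfl
  have hbound : ∀ x : C₀(ℕ, ℝ), ‖TL x‖ ≤ (1+ε) * ‖x‖ := by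
    intro x
    rw [hTLnorm]
    calc ‖∑' k, x k • u k‖ ≤ (1+2*δ)*‖x‖ := hub x
      _ ≤ (1+ε)*‖x‖ := mul_le_mul_of_nonneg_right (by linarith) (norm_nonneg _)
  refine ⟨TL.mkContinuous (1+ε) hbound, ?_, fun x => ⟨?_, ?_⟩⟩
  · intro x y hxy
    have h0 : TL (x - y) = 0 := by
      have hxy' : TL x = TL y := by
        simpa only [LinearMap.mkContinuous_apply] using hxy
      rw [map_sub, hxy', sub_self]
    have h1 : ‖TL (x-y)‖ = 0 := by rw [h0, norm_zero]
    rw [hTLnorm] at h1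
    have h2 := hlb (x - y)
    rw [h1] at h2
    have h3 : ‖x - y‖ ≤ 0 := by nlinarith [norm_nonneg (x - y)]
    exact sub_eq_zero.mp (norm_le_zero_iff.mp h3)
  · rw [LinearMap.mkContinuous_apply, hTLnorm]
    calc (1-ε)*‖x‖ ≤ (1-2*δ)*‖x‖ := mul_le_mul_of_nonneg_right (by linarith) (norm_nonneg _)
      _ ≤ _ := hlb x
  · rw [LinearMap.mkContinuous_apply, hTLnorm]
    calc ‖∑' k, x k • u k‖ ≤ (1+2*δ)*‖x‖ := hub x
      _ ≤ (1+ε)*‖x‖ := mul_le_mul_of_nonneg_right (by linarith) (norm_nonneg _)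
end
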